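/- arXiv:1101.4038 — 4 statements merged into one kernel-verified Lean document; each statement's English description precedes it below -/
import Mathlib

section
/- If the accessible region R is closed, then for each i = 1, ..., k the estimator p̂_i(y) = k_i*(y)/k(y), evaluated at the first boundary point y reached by the process, is an unbiased estimator of p_i; that is, ∑_{y ∈ B} (k_i*(y)/k(y)) · k(y) p_1^{y_1} ··· p_k^{y_k} = p_i. -/
open scoped Classical

/-- Number of lattice paths from `a` to `x`, each step adding one standard
basis vector, all of whose points (including the endpoints) lie in `A`. -/
noncomputable def pathCount {k : ℕ} (A : Set (Fin k → ℕ)) (a : Fin k → ℕ)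
    (x : Fin k → ℕ) : ℕ :=
  if x = a then (if a ∈ A then 1 else 0)
  else if x ∈ A then
    ∑ i : Fin k, if h : 0 < x i then pathCount A a (Function.update x i (x i - 1)) else 0
  else 0
termination_by ∑ i, x i
decreasing_by
  have h1 := Finset.sum_update_of_mem (Finset.mem_univ i) x (x i - 1)
  have h2 := Finset.sum_eq_sum_sdiff_singleton_add (Finset.mem_univ i) x
  omega

/-- The boundary `B` of a region `R ⊆ ℕᵏ`: the points not in `R` that can be
reached in one step (addition of one standard basis vector) from a point of `R`. -/
def bdry {k : ℕ} (R : Set (Fin k → ℕ)) : Set (Fin k → ℕ) :=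
  {y | y ∉ R ∧ ∃ x ∈ R, ∃ i : Fin k, y = x + Pi.single i 1}

/-- Number of lattice paths from `a` to `y` all of whose points except `y`
lie in `R`. -/
noncomputable def exitCount {k : ℕ} (R : Set (Fin k → ℕ)) (a y : Fin k → ℕ) : ℕ :=
  pathCount (insert y R) a y

/-- `R ⊆ ℕᵏ` is *simple* if for every `n` the convex hull (in `ℝᵏ`) of
`Rₙ = R ∩ Sₙ` contains no point of `Sₙ = {x ∈ ℕᵏ : ∑ xᵢ = n}` outside `Rₙ`. -/
def IsSimple {k : ℕ} (R : Set (Fin k → ℕ)) : Prop :=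
  ∀ n : ℕ, ∀ x : Fin k → ℕ, ∑ i, x i = n →
    (fun i => (x i : ℝ)) ∈ convexHull ℝ
      ((fun (z : Fin k → ℕ) (i : Fin k) => (z i : ℝ)) ''
        {z : Fin k → ℕ | z ∈ R ∧ ∑ i, z i = n}) →
    x ∈ R

section EstimatorAux

variable {k : ℕ}

lemma sum_update_sub {x : Fin k → ℕ} {i : Fin k} (h : 0 < x i) :
    ∑ j, Function.update x i (x i - 1) j = (∑ j, x j) - 1 := by
  have h1 := Finset.sum_update_of_mem (Finset.mem_univ i) x (x i - 1)
  have h2 := Finset.sum_eq_sum_sdiff_singleton_add (Finset.mem_univ i) x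
  omega

lemma pathCount_of_not_mem {A : Set (Fin k → ℕ)} {a x : Fin k → ℕ} (h : x ∉ A) :
    pathCount A a x = 0 := by
  rw [pathCount]
  by_cases hxa : x = a
  · subst hxa; simp [h]
  · simp [hxa, h]

lemma pathCount_self {A : Set (Fin k → ℕ)} {a : Fin k → ℕ} (h : a ∈ A) :
    pathCount A a a = 1 := by
  rw [pathCount]; simp [h]

lemma pathCount_of_sum_lt {A : Set (Fin k → ℕ)} {a : Fin k → ℕ} :
    ∀ n, ∀ x : Fin k → ℕ, ∑ j, x j = n → (∑ j, x j) < ∑ j, a j → pathCount A a x = 0 := by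
  intro n
  induction n using Nat.strong_induction_on with
  | _ n ih =>
    intro x hxn hlt
    have hxa : x ≠ a := by rintro rfl; omega
    rw [pathCount, if_neg hxa]
    split
    · apply Finset.sum_eq_zero; intro i _
      split
      · next h =>
        have hs := sum_update_sub (x := x) h
        have hpos : 0 < x i := h
        have hone : x i ≤ ∑ j, x j :=
          Finset.single_le_sum (fun _ _ => Nat.zero_le _) (Finset.mem_univ i)
        exact ih _ (by omega) _ hs (by omega)
      · rfl
    · rfl

lemma pathCount_of_sum_le {A : Set (Fin k → ℕ)} {a x : Fin k → ℕ}
    (hle : ∑ j, x j ≤ ∑ j, a j) (hne : x ≠ a) : pathCount A a x = 0 := by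
  rw [pathCount, if_neg hne]
  split
  · apply Finset.sum_eq_zero; intro i _
    split
    · next h =>
      have hs := sum_update_sub (x := x) h
      have hpos : 0 < ∑ j, x j := by
        calc 0 < x i := h
        _ ≤ ∑ j, x j := Finset.single_le_sum (fun _ _ => Nat.zero_le _) (Finset.mem_univ i)
      exact pathCount_of_sum_lt _ _ rfl (by omega)
    · rfl
  · rfl

lemma pathCount_congr {a : Fin k → ℕ} :
    ∀ n, ∀ x : Fin k → ℕ, ∑ j, x j = n → ∀ (A A' : Set (Fin k → ℕ)),
      (∀ z : Fin k → ℕ, (∑ j, z j) ≤ n → (z ∈ A ↔ z ∈ A')) →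
      pathCount A a x = pathCount A' a x := by
  intro n
  induction n using Nat.strong_induction_on with
  | _ n ih =>
    intro x hxn A A' hAA
    have hxmem : x ∈ A ↔ x ∈ A' := hAA x (by omega)
    rw [pathCount, pathCount]
    by_cases hxa : x = a
    · subst hxa; simp only [if_pos rfl]
      by_cases h : x ∈ A
      · simp [h, hxmem.mp h]
      · have h' : x ∉ A' := fun h' => h (hxmem.mpr h')
        simp [h, h']
    · rw [if_neg hxa, if_neg hxa]
      by_cases h : x ∈ A
      · rw [if_pos h, if_pos (hxmem.mp h)]
        apply Finset.sum_congr rfl; intro i _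
        split
        · next hpos =>
          have hs := sum_update_sub (x := x) hpos
          have hone : x i ≤ ∑ j, x j :=
            Finset.single_le_sum (fun _ _ => Nat.zero_le _) (Finset.mem_univ i)
          exact ih _ (by omega) _ hs A A' (fun z hz => hAA z (by omega))
        · rfl
      · rw [if_neg h, if_neg (fun h' => h (hxmem.mpr h'))]

lemma update_single_self (i : Fin k) :
    Function.update (Pi.single i 1 : Fin k → ℕ) i ((Pi.single i 1 : Fin k → ℕ) i - 1) = 0 := by
  funext l
  by_cases h : l = i <;> simp [Function.update_apply, h, Pi.single_apply]

lemma pathCount_first_step {A : Set (Fin k → ℕ)} (h0 : (0 : Fin k → ℕ) ∈ A) :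
    ∀ n, ∀ x : Fin k → ℕ, ∑ j, x j = n → x ≠ 0 →
      pathCount A 0 x = ∑ j, pathCount A (Pi.single j 1) x := by
  intro n
  induction n using Nat.strong_induction_on with
  | _ n ih =>
    intro x hxn hx0
    by_cases hxA : x ∈ A
    case neg =>
      rw [pathCount_of_not_mem hxA]
      exact (Finset.sum_eq_zero fun j _ => pathCount_of_not_mem hxA).symm
    case pos =>
      have hzero : ∀ j : Fin k, pathCount A (Pi.single j 1) (0 : Fin k → ℕ) = 0 := by
        intro j
        apply pathCount_of_sum_lt _ _ rfl
        simp [Pi.single_apply]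
      have hcrux : ∀ j : Fin k, pathCount A (Pi.single j 1) x
          = (if x = Pi.single j 1 then 1 else 0)
            + ∑ i, if _ : 0 < x i then pathCount A (Pi.single j 1) (Function.update x i (x i - 1)) else 0 := by
        intro j
        by_cases hxe : x = Pi.single j 1
        · rw [if_pos hxe]; subst hxe
          rw [pathCount_self hxA]
          have hsum0 : ∑ i, (if _ : 0 < (Pi.single j 1 : Fin k → ℕ) i then
              pathCount A (Pi.single j 1) (Function.update (Pi.single j 1 : Fin k → ℕ) i ((Pi.single j 1 : Fin k → ℕ) i - 1)) else 0) = 0 := by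
            apply Finset.sum_eq_zero; intro i _
            by_cases hij : i = j
            · subst hij
              rw [dif_pos (by simp), update_single_self, hzero]
            · rw [dif_neg (by simp [Pi.single_apply, hij])]
          rw [hsum0]
        · rw [if_neg hxe, pathCount, if_neg hxe, if_pos hxA, zero_add]
      have hlhs : ∀ i : Fin k, (if _ : 0 < x i then pathCount A 0 (Function.update x i (x i - 1)) else 0)
          = (if x = Pi.single i 1 then 1 else 0)
            + ∑ j, if _ : 0 < x i then pathCount A (Pi.single j 1) (Function.update x i (x i - 1)) else 0 := by
        intro i
        by_cases hpos : 0 < x i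
        · by_cases hxe : x = Pi.single i 1
          · rw [if_pos hxe]
            subst hxe
            rw [dif_pos hpos, update_single_self, pathCount_self h0]
            simp [hzero]
          · have hz : Function.update x i (x i - 1) ≠ 0 := by
              intro hz; apply hxe; funext l
              have hl := congrFun hz l
              by_cases h : l = i
              · subst h; simp [Function.update_apply] at hl; simp [Pi.single_apply]; omega
              · simp [Function.update_apply, h] at hl; simp [Pi.single_apply, h, hl]
            rw [if_neg hxe, zero_add, dif_pos hpos]
            have hs := sum_update_sub hpos
            have hone : x i ≤ ∑ j, x j :=
              Finset.single_le_sum (fun _ _ => Nat.zero_le _) (Finset.mem_univ i)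
            rw [ih _ (by omega) _ hs hz]
            exact Finset.sum_congr rfl fun j _ => by rw [dif_pos hpos]
        · have hxe : x ≠ Pi.single i 1 := by
            intro h; apply hpos; rw [h]; simp
          rw [dif_neg hpos, if_neg hxe]
          simp [hpos]
      rw [pathCount, if_neg hx0, if_pos hxA]
      calc ∑ i, (if _ : 0 < x i then pathCount A 0 (Function.update x i (x i - 1)) else 0)
          = ∑ i, ((if x = Pi.single i 1 then 1 else 0)
              + ∑ j, if _ : 0 < x i then pathCount A (Pi.single j 1) (Function.update x i (x i - 1)) else 0) :=
            Finset.sum_congr rfl fun i _ => hlhs i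
        _ = ∑ j, ((if x = Pi.single j 1 then 1 else 0)
              + ∑ i, if _ : 0 < x i then pathCount A (Pi.single j 1) (Function.update x i (x i - 1)) else 0) := by
            rw [Finset.sum_add_distrib, Finset.sum_add_distrib, Finset.sum_comm]
        _ = ∑ j, pathCount A (Pi.single j 1) x := Finset.sum_congr rfl fun j _ => (hcrux j).symm

lemma pathCount_self_eq {A : Set (Fin k → ℕ)} (a : Fin k → ℕ) :
    pathCount A a a = if a ∈ A then 1 else 0 := by
  rw [pathCount]; simp

lemma sum_add_single (x : Fin k → ℕ) (j : Fin k) :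
    ∑ l, (x + Pi.single j 1 : Fin k → ℕ) l = (∑ l, x l) + 1 := by
  simp [Finset.sum_add_distrib, Pi.single_apply]

lemma update_add_single {x : Fin k → ℕ} {j : Fin k} (h : 0 < x j) :
    (Function.update x j (x j - 1) + Pi.single j 1 : Fin k → ℕ) = x := by
  funext l
  by_cases hl : l = j
  · subst hl; simp [Function.update_apply, Pi.single_apply]; omega
  · simp [Function.update_apply, Pi.single_apply, hl]

lemma update_of_add_single (x : Fin k → ℕ) (j : Fin k) :
    Function.update (x + Pi.single j 1 : Fin k → ℕ) j ((x + Pi.single j 1 : Fin k → ℕ) j - 1) = x := by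
  funext l
  by_cases hl : l = j
  · subst hl; simp [Function.update_apply, Pi.single_apply]
  · simp [Function.update_apply, Pi.single_apply, hl]

lemma prod_pow_single (p : Fin k → ℝ) (j : Fin k) :
    ∏ l, p l ^ (Pi.single j 1 : Fin k → ℕ) l = p j := by
  rw [Finset.prod_eq_single j (fun l _ hl => by simp [Pi.single_apply, hl])
    (fun h => absurd (Finset.mem_univ j) h)]
  simp

lemma prod_pow_add_single (p : Fin k → ℝ) (x : Fin k → ℕ) (j : Fin k) :
    ∏ l, p l ^ ((x + Pi.single j 1 : Fin k → ℕ) l) = (∏ l, p l ^ x l) * p j := by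
  have h : ∀ l, (x + Pi.single j 1 : Fin k → ℕ) l = x l + (Pi.single j 1 : Fin k → ℕ) l := fun l => rfl
  simp_rw [h, pow_add]
  rw [Finset.prod_mul_distrib, prod_pow_single]

lemma reindex_sum (g : (Fin k → ℕ) → Fin k → ℝ) (n : ℕ) :
    ∑ x ∈ Finset.Nat.antidiagonalTuple k n, ∑ j, g (x + Pi.single j 1 : Fin k → ℕ) j
      = ∑ x ∈ Finset.Nat.antidiagonalTuple k (n+1), ∑ j, if 0 < x j then g x j else 0 := by
  rw [Finset.sum_comm, Finset.sum_comm (s := Finset.Nat.antidiagonalTuple k (n+1))]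
  refine Finset.sum_congr rfl fun j _ => ?_
  rw [← Finset.sum_filter]
  refine Finset.sum_nbij' (fun x => x + Pi.single j 1)
    (fun y => Function.update y j (y j - 1)) ?_ ?_ ?_ ?_ ?_
  · intro x hx
    rw [Finset.Nat.mem_antidiagonalTuple] at hx
    rw [Finset.mem_filter, Finset.Nat.mem_antidiagonalTuple]
    refine ⟨by rw [sum_add_single, hx], ?_⟩
    simp [Pi.single_apply]
  · intro y hy
    rw [Finset.mem_filter, Finset.Nat.mem_antidiagonalTuple] at hy
    rw [Finset.Nat.mem_antidiagonalTuple, sum_update_sub hy.2]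
    omega
  · intro x _
    exact update_of_add_single x j
  · intro y hy
    rw [Finset.mem_filter] at hy
    exact update_add_single hy.2
  · intro x _
    rfl

lemma step_key {R : Set (Fin k → ℕ)} {a : Fin k → ℕ} (x' : Fin k → ℕ)
    (hgt : ∑ j, a j < ∑ j, x' j) :
    ∑ j, (if 0 < x' j then pathCount R a (Function.update x' j (x' j - 1)) else 0)
      = pathCount R a x' + (if x' ∈ bdry R then exitCount R a x' else 0) := by
  have hxa : x' ≠ a := by rintro rfl; omega
  by_cases hR : x' ∈ R
  · have hnb : x' ∉ bdry R := fun h => h.1 hR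
    rw [if_neg hnb, add_zero, pathCount, if_neg hxa, if_pos hR]
    simp only [dite_eq_ite]
  · rw [pathCount_of_not_mem hR, zero_add]
    by_cases hB : x' ∈ bdry R
    · rw [if_pos hB, exitCount, pathCount, if_neg hxa,
        if_pos (Set.mem_insert x' R)]
      simp only [dite_eq_ite]
      refine Finset.sum_congr rfl fun j _ => ?_
      by_cases hj : 0 < x' j
      · rw [if_pos hj, if_pos hj]
        have hs := sum_update_sub (x := x') hj
        refine (pathCount_congr _ _ hs _ _ fun z hz => ?_).symm
        rw [Set.mem_insert_iff]
        have hone : x' j ≤ ∑ l, x' l :=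
          Finset.single_le_sum (fun _ _ => Nat.zero_le _) (Finset.mem_univ j)
        constructor
        · rintro (rfl | hzr)
          · omega
          · exact hzr
        · exact fun h => Or.inr h
      · rw [if_neg hj, if_neg hj]
    · rw [if_neg hB]
      apply Finset.sum_eq_zero; intro j _
      by_cases hj : 0 < x' j
      · rw [if_pos hj]
        apply pathCount_of_not_mem
        intro hzR
        exact hB ⟨hR, _, hzR, j, (update_add_single hj).symm⟩
      · rw [if_neg hj]

lemma exit_identity (p : Fin k → ℝ) (hsum : ∑ i, p i = 1)
    (R : Set (Fin k → ℕ)) (a : Fin k → ℕ) (ha : a ∈ R ∪ bdry R) :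
    ∀ n, (∑ j, a j) ≤ n →
      (∑ x ∈ Finset.Nat.antidiagonalTuple k n, (pathCount R a x : ℝ) * ∏ l, p l ^ x l)
      + ∑ m ∈ Finset.range (n+1), ∑ y ∈ (Finset.Nat.antidiagonalTuple k m).filter (· ∈ bdry R),
          (exitCount R a y : ℝ) * ∏ l, p l ^ y l
      = ∏ l, p l ^ a l := by
  intro n hn
  induction n, hn using Nat.le_induction with
  | base =>
    have hF : (∑ x ∈ Finset.Nat.antidiagonalTuple k (∑ j, a j),
        (pathCount R a x : ℝ) * ∏ l, p l ^ x l) = (pathCount R a a : ℝ) * ∏ l, p l ^ a l := by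
      apply Finset.sum_eq_single_of_mem a (Finset.Nat.mem_antidiagonalTuple.mpr rfl)
      intro x hx hne
      rw [Finset.Nat.mem_antidiagonalTuple] at hx
      rw [pathCount_of_sum_le (le_of_eq hx) hne]
      simp
    rw [hF]
    rcases ha with haR | haB
    · have hG : ∀ m ∈ Finset.range ((∑ j, a j)+1),
          (∑ y ∈ (Finset.Nat.antidiagonalTuple k m).filter (· ∈ bdry R),
            (exitCount R a y : ℝ) * ∏ l, p l ^ y l) = 0 := by
        intro m hm
        apply Finset.sum_eq_zero; intro y hy
        rw [Finset.mem_filter, Finset.Nat.mem_antidiagonalTuple] at hy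
        have hya : y ≠ a := fun h => hy.2.1 (h ▸ haR)
        rw [Finset.mem_range] at hm
        rw [exitCount, pathCount_of_sum_le (by omega) hya]
        simp
      rw [Finset.sum_congr rfl hG, Finset.sum_const, smul_zero, add_zero,
        pathCount_self_eq, if_pos haR, Nat.cast_one, one_mul]
    · have haR : a ∉ R := haB.1
      rw [pathCount_self_eq, if_neg haR, Nat.cast_zero, zero_mul, zero_add]
      rw [Finset.sum_eq_single_of_mem (∑ j, a j) (Finset.self_mem_range_succ _)]
      · rw [Finset.sum_eq_single_of_mem a
          (Finset.mem_filter.mpr ⟨Finset.Nat.mem_antidiagonalTuple.mpr rfl, haB⟩)]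
        · rw [exitCount, pathCount_self (Set.mem_insert a R), Nat.cast_one, one_mul]
        · intro y hy hne
          rw [Finset.mem_filter, Finset.Nat.mem_antidiagonalTuple] at hy
          rw [exitCount, pathCount_of_sum_le (le_of_eq hy.1) hne]
          simp
      · intro m hm hne
        apply Finset.sum_eq_zero; intro y hy
        rw [Finset.mem_filter, Finset.Nat.mem_antidiagonalTuple] at hy
        rw [Finset.mem_range] at hm
        have hya : y ≠ a := by rintro rfl; omega
        rw [exitCount, pathCount_of_sum_le (by omega) hya]
        simp
  | succ n hn ihn =>
    rw [Finset.sum_range_succ, ← add_assoc, ← ihn]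
    -- suffices: F (n+1) + D (n+1) = F n, then add G n on both sides
    have key : (∑ x ∈ Finset.Nat.antidiagonalTuple k (n+1), (pathCount R a x : ℝ) * ∏ l, p l ^ x l)
        + (∑ y ∈ (Finset.Nat.antidiagonalTuple k (n+1)).filter (· ∈ bdry R),
            (exitCount R a y : ℝ) * ∏ l, p l ^ y l)
        = ∑ x ∈ Finset.Nat.antidiagonalTuple k n, (pathCount R a x : ℝ) * ∏ l, p l ^ x l := by
      have h1 : (∑ x ∈ Finset.Nat.antidiagonalTuple k n, (pathCount R a x : ℝ) * ∏ l, p l ^ x l)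
          = ∑ x ∈ Finset.Nat.antidiagonalTuple k n, ∑ j,
              (fun (z : Fin k → ℕ) (j : Fin k) =>
                (pathCount R a (Function.update z j (z j - 1)) : ℝ) * ∏ l, p l ^ z l)
              (x + Pi.single j 1 : Fin k → ℕ) j := by
        refine Finset.sum_congr rfl fun x _ => ?_
        have : ∀ j : Fin k, (pathCount R a (Function.update (x + Pi.single j 1 : Fin k → ℕ) j
            ((x + Pi.single j 1 : Fin k → ℕ) j - 1)) : ℝ) * ∏ l, p l ^ (x + Pi.single j 1 : Fin k → ℕ) l
            = (pathCount R a x : ℝ) * (∏ l, p l ^ x l) * p j := by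
          intro j
          rw [update_of_add_single, prod_pow_add_single, mul_assoc]
        simp only [this]
        rw [← Finset.mul_sum, hsum, mul_one]
      rw [h1, reindex_sum (fun (z : Fin k → ℕ) (j : Fin k) =>
        (pathCount R a (Function.update z j (z j - 1)) : ℝ) * ∏ l, p l ^ z l) n]
      have h2 : ∀ x' ∈ Finset.Nat.antidiagonalTuple k (n+1),
          (∑ j, if 0 < x' j then (pathCount R a (Function.update x' j (x' j - 1)) : ℝ) * ∏ l, p l ^ x' l else 0)
          = ((pathCount R a x' : ℝ) + if x' ∈ bdry R then (exitCount R a x' : ℝ) else 0) * ∏ l, p l ^ x' l := by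
        intro x' hx'
        rw [Finset.Nat.mem_antidiagonalTuple] at hx'
        have hkey := step_key (R := R) (a := a) x' (by omega)
        have hcast : ((∑ j, (if 0 < x' j then pathCount R a (Function.update x' j (x' j - 1)) else 0) : ℕ) : ℝ)
            = ((pathCount R a x' + (if x' ∈ bdry R then exitCount R a x' else 0) : ℕ) : ℝ) := by
          exact congrArg (fun t : ℕ => (t : ℝ)) hkey
        push_cast at hcast
        calc (∑ j, if 0 < x' j then (pathCount R a (Function.update x' j (x' j - 1)) : ℝ) * ∏ l, p l ^ x' l else 0)
            = (∑ j, if 0 < x' j then (pathCount R a (Function.update x' j (x' j - 1)) : ℝ) else 0) * ∏ l, p l ^ x' l := by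
              rw [Finset.sum_mul]
              refine Finset.sum_congr rfl fun j _ => ?_
              rw [ite_mul, zero_mul]
          _ = ((pathCount R a x' : ℝ) + if x' ∈ bdry R then (exitCount R a x' : ℝ) else 0) * ∏ l, p l ^ x' l := by
              rw [hcast]
      rw [Finset.sum_congr rfl h2]
      rw [Finset.sum_filter]
      rw [← Finset.sum_add_distrib]
      refine Finset.sum_congr rfl fun x' _ => ?_
      rw [add_mul, ite_mul, zero_mul]
    rw [← key]
    ring


end EstimatorAux

/-- If the accessible region `R` is closed, then for each `i`
the estimator `p̂ᵢ(y) = kᵢ*(y)/k(y)`, evaluated at the first boundary point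
reached, is an unbiased estimator of `pᵢ`:
`∑_{y ∈ B} (kᵢ*(y)/k(y)) · k(y) p₁^{y₁} ⋯ p_k^{y_k} = pᵢ`. -/
theorem estimator_unbiased {k : ℕ} (p : Fin k → ℝ) (hp : ∀ i, 0 < p i)
    (hsum : ∑ i, p i = 1) (R : Set (Fin k → ℕ)) (h0 : (0 : Fin k → ℕ) ∈ R)
    (hclosed : ∑' y : bdry R,
      (exitCount R 0 (y : Fin k → ℕ) : ℝ) * ∏ j, p j ^ (y : Fin k → ℕ) j = 1)
    (i : Fin k) :
    ∑' y : bdry R,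
        ((exitCount R (Pi.single i 1) (y : Fin k → ℕ) : ℝ) /
            (exitCount R 0 (y : Fin k → ℕ) : ℝ)) *
          ((exitCount R 0 (y : Fin k → ℕ) : ℝ) * ∏ j, p j ^ (y : Fin k → ℕ) j)
      = p i := by
  classical
  have hpw : ∀ y : Fin k → ℕ, (0:ℝ) ≤ ∏ l, p l ^ y l :=
    fun y => Finset.prod_nonneg fun l _ => pow_nonneg (hp l).le _
  have hy0 : ∀ y : Fin k → ℕ, y ∈ bdry R → y ≠ 0 := fun y hy h => hy.1 (h ▸ h0)
  have hdecomp : ∀ y : Fin k → ℕ, y ∈ bdry R →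
      exitCount R 0 y = ∑ j, exitCount R (Pi.single j 1) y := by
    intro y hy
    exact pathCount_first_step (Set.mem_insert_of_mem _ h0) _ y rfl (hy0 y hy)
  have hle : ∀ (j : Fin k) (y : Fin k → ℕ), y ∈ bdry R →
      exitCount R (Pi.single j 1) y ≤ exitCount R 0 y := by
    intro j y hy
    rw [hdecomp y hy]
    exact Finset.single_le_sum (f := fun l => exitCount R (Pi.single l 1) y)
      (fun _ _ => Nat.zero_le _) (Finset.mem_univ j)
  have hfs : Summable (fun y : bdry R =>
      (exitCount R 0 (y : Fin k → ℕ) : ℝ) * ∏ l, p l ^ (y : Fin k → ℕ) l) := by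
    by_contra hns
    rw [tsum_eq_zero_of_not_summable hns] at hclosed
    norm_num at hclosed
  have hgs : ∀ j : Fin k, Summable (fun y : bdry R =>
      (exitCount R (Pi.single j 1) (y : Fin k → ℕ) : ℝ) * ∏ l, p l ^ (y : Fin k → ℕ) l) := by
    intro j
    apply Summable.of_nonneg_of_le
      (fun y => mul_nonneg (Nat.cast_nonneg _) (hpw _)) _ hfs
    intro y
    exact mul_le_mul_of_nonneg_right (by exact_mod_cast hle j y y.2) (hpw _)
  have hbound : ∀ j : Fin k, ∀ s : Finset (bdry R),
      (∑ y ∈ s, (exitCount R (Pi.single j 1) (y : Fin k → ℕ) : ℝ)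
        * ∏ l, p l ^ (y : Fin k → ℕ) l) ≤ p j := by
    intro j s
    set n : ℕ := 1 + s.sup (fun y => ∑ l, y.1 l) with hndef
    have ha : (Pi.single j 1 : Fin k → ℕ) ∈ R ∪ bdry R := by
      by_cases h : (Pi.single j 1 : Fin k → ℕ) ∈ R
      · exact Or.inl h
      · exact Or.inr ⟨h, 0, h0, j, (zero_add _).symm⟩
    have hsingle : ∑ l, (Pi.single j 1 : Fin k → ℕ) l = 1 := by simp [Pi.single_apply]
    have h1n : 1 ≤ n := by omega
    have hid := exit_identity p hsum R (Pi.single j 1) ha n (by rw [hsingle]; exact h1n)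
    rw [prod_pow_single] at hid
    have hF : 0 ≤ ∑ x ∈ Finset.Nat.antidiagonalTuple k n,
        (pathCount R (Pi.single j 1) x : ℝ) * ∏ l, p l ^ x l :=
      Finset.sum_nonneg fun x _ => mul_nonneg (Nat.cast_nonneg _) (hpw _)
    have hGle : (∑ m ∈ Finset.range (n+1),
        ∑ y ∈ (Finset.Nat.antidiagonalTuple k m).filter (· ∈ bdry R),
          (exitCount R (Pi.single j 1) y : ℝ) * ∏ l, p l ^ y l) ≤ p j := by linarith
    refine le_trans ?_ hGle
    have hdisj : (↑(Finset.range (n+1)) : Set ℕ).PairwiseDisjoint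
        (fun m => (Finset.Nat.antidiagonalTuple k m).filter (· ∈ bdry R)) := by
      intro m _ m' _ hne
      rw [Function.onFun, Finset.disjoint_left]
      intro z hz hz'
      rw [Finset.mem_filter, Finset.Nat.mem_antidiagonalTuple] at hz hz'
      exact hne (by omega)
    rw [← Finset.sum_biUnion hdisj]
    have hsub : s.image Subtype.val ⊆
        (Finset.range (n+1)).biUnion
          (fun m => (Finset.Nat.antidiagonalTuple k m).filter (· ∈ bdry R)) := by
      intro z hz
      rw [Finset.mem_image] at hz
      obtain ⟨y, hys, rfl⟩ := hz
      rw [Finset.mem_biUnion]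
      refine ⟨∑ l, y.1 l, ?_, ?_⟩
      · rw [Finset.mem_range]
        have h : ∑ l, y.1 l ≤ s.sup fun y : bdry R => ∑ l, y.1 l :=
          Finset.le_sup (f := fun y : bdry R => ∑ l, y.1 l) hys
        omega
      · exact Finset.mem_filter.mpr ⟨Finset.Nat.mem_antidiagonalTuple.mpr rfl, y.2⟩
    have himg : (∑ y ∈ s, (exitCount R (Pi.single j 1) (y : Fin k → ℕ) : ℝ)
          * ∏ l, p l ^ (y : Fin k → ℕ) l)
        = ∑ z ∈ s.image Subtype.val,
          (exitCount R (Pi.single j 1) z : ℝ) * ∏ l, p l ^ z l := by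
      rw [Finset.sum_image (fun a _ b _ h => Subtype.ext h)]
    rw [himg]
    apply Finset.sum_le_sum_of_subset_of_nonneg hsub
    intro z _ _
    exact mul_nonneg (Nat.cast_nonneg _) (hpw _)
  have ht_le : ∀ j : Fin k, (∑' y : bdry R,
      (exitCount R (Pi.single j 1) (y : Fin k → ℕ) : ℝ)
        * ∏ l, p l ^ (y : Fin k → ℕ) l) ≤ p j :=
    fun j => Summable.tsum_le_of_sum_le (hgs j) (hbound j)
  have ht_sum : (∑ j : Fin k, ∑' y : bdry R,
      (exitCount R (Pi.single j 1) (y : Fin k → ℕ) : ℝ)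
        * ∏ l, p l ^ (y : Fin k → ℕ) l) = 1 := by
    rw [← Summable.tsum_finsetSum (fun j _ => hgs j), ← hclosed]
    refine tsum_congr fun y => ?_
    rw [← Finset.sum_mul]
    congr 1
    exact_mod_cast (congrArg (fun t : ℕ => (t:ℝ)) (hdecomp y y.2)).symm
  have ht : (∑' y : bdry R,
      (exitCount R (Pi.single i 1) (y : Fin k → ℕ) : ℝ)
        * ∏ l, p l ^ (y : Fin k → ℕ) l) = p i := by
    by_contra hne
    have hlt := lt_of_le_of_ne (ht_le i) hne
    have : (∑ j : Fin k, ∑' y : bdry R,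
        (exitCount R (Pi.single j 1) (y : Fin k → ℕ) : ℝ)
          * ∏ l, p l ^ (y : Fin k → ℕ) l) < ∑ j, p j :=
      Finset.sum_lt_sum (fun j _ => ht_le j) ⟨i, Finset.mem_univ i, hlt⟩
    rw [ht_sum, hsum] at this
    exact lt_irrefl 1 this
  rw [← ht]
  refine tsum_congr fun y => ?_
  by_cases hb : (exitCount R 0 (y : Fin k → ℕ) : ℝ) = 0
  · have h0' : exitCount R 0 (y : Fin k → ℕ) = 0 := by exact_mod_cast hb
    have hzero : exitCount R (Pi.single i 1) (y : Fin k → ℕ) = 0 := by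
      have := hle i y y.2
      omega
    rw [hzero, h0']
    simp
  · field_simp
end

section
/- If the accessible region R is closed, then for each i = 1, ..., k the combinatorial identity ∑_{y ∈ B} k_i*(y) · p_1^{y_1} ··· p_k^{y_k} = p_i holds. -/
open scoped Classical

namespace UA
variable {k : ℕ}

lemma coord_le_sum (x : Fin k → ℕ) (i : Fin k) : x i ≤ ∑ j, x j :=
  Finset.single_le_sum (fun _ _ => Nat.zero_le _) (Finset.mem_univ i)

lemma update_sum {x : Fin k → ℕ} {j : Fin k} (h : 0 < x j) :
    ∑ i, Function.update x j (x j - 1) i = (∑ i, x i) - 1 := by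
  have h1 := Finset.sum_update_of_mem (Finset.mem_univ j) x (x j - 1)
  have h2 := Finset.sum_eq_sum_sdiff_singleton_add (Finset.mem_univ j) x
  omega

lemma update_add_single {x : Fin k → ℕ} {j : Fin k} (h : 0 < x j) :
    Function.update x j (x j - 1) + Pi.single j 1 = x := by
  funext i
  by_cases hij : i = j
  · subst hij; simp; omega
  · simp [Function.update_of_ne hij, Pi.single_eq_of_ne hij]

lemma update_of_add_single (x : Fin k → ℕ) (j : Fin k) :
    Function.update (x + (Pi.single j 1 : Fin k → ℕ)) j ((x + (Pi.single j 1 : Fin k → ℕ)) j - 1) = x := by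
  funext i
  by_cases hij : i = j
  · subst hij; simp
  · simp [Function.update_of_ne hij, Pi.single_eq_of_ne hij]

lemma sum_add_single (x : Fin k → ℕ) (j : Fin k) :
    ∑ i, (x + (Pi.single j 1 : Fin k → ℕ)) i = (∑ i, x i) + 1 := by
  simp [Finset.sum_add_distrib]

lemma pathCount_small {A : Set (Fin k → ℕ)} {a : Fin k → ℕ} :
    ∀ (n : ℕ) (x : Fin k → ℕ), ∑ i, x i ≤ n → ∑ i, x i ≤ ∑ i, a i → x ≠ a →
      pathCount A a x = 0 := by
  intro n
  induction n with
  | zero =>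
    intro x hn _ hxa
    rw [pathCount, if_neg hxa]
    have : ∀ i : Fin k, ¬ (0 < x i) := by
      intro i hi
      have := coord_le_sum x i; omega
    simp [this]
  | succ n ih =>
    intro x hn hle hxa
    rw [pathCount, if_neg hxa]
    split
    · apply Finset.sum_eq_zero
      intro j _
      split
      · next hj =>
        apply ih
        · rw [update_sum hj]; omega
        · rw [update_sum hj]; omega
        · intro he
          have h4 := update_sum (x := x) hj
          have h5 := coord_le_sum x j
          rw [he] at h4
          omega
      · rfl
    · rfl
end UA

namespace UA

lemma pathCount_not_mem {A : Set (Fin k → ℕ)} {a : Fin k → ℕ} (ha : a ∉ A) :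
    ∀ (n : ℕ) (x : Fin k → ℕ), ∑ i, x i ≤ n → pathCount A a x = 0 := by
  intro n
  induction n with
  | zero =>
    intro x hn
    rw [pathCount]
    split
    · simp [ha]
    · have : ∀ i : Fin k, ¬ (0 < x i) := by
        intro i hi; have := coord_le_sum x i; omega
      simp [this]
  | succ n ih =>
    intro x hn
    rw [pathCount]
    split
    · simp [ha]
    · split
      · apply Finset.sum_eq_zero
        intro j _
        split
        · next hj =>
          apply ih
          rw [update_sum hj]
          have := coord_le_sum x j
          omega
        · rfl
      · rfl

lemma pathCount_insert {R : Set (Fin k → ℕ)} {y' a : Fin k → ℕ} :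
    ∀ (n : ℕ) (x : Fin k → ℕ), ∑ i, x i ≤ n → ∑ i, x i < ∑ i, y' i →
      pathCount (insert y' R) a x = pathCount R a x := by
  intro n
  induction n with
  | zero =>
    intro x hn hxy
    have hxy' : x ≠ y' := by intro h; rw [h] at hxy; omega
    rw [pathCount, pathCount]
    split
    · next h =>
      subst h
      have : x ∈ insert y' R ↔ x ∈ R := by
        simp [Set.mem_insert_iff, hxy']
      by_cases hR : x ∈ R
      · rw [if_pos (this.mpr hR), if_pos hR]
      · rw [if_neg (fun hh => hR (this.mp hh)), if_neg hR]
    · have : ∀ i : Fin k, ¬ (0 < x i) := by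
        intro i hi; have := coord_le_sum x i; omega
      simp [this]
  | succ n ih =>
    intro x hn hxy
    have hxy' : x ≠ y' := by intro h; rw [h] at hxy; omega
    have hmem : x ∈ insert y' R ↔ x ∈ R := by
      simp [Set.mem_insert_iff, hxy']
    rw [pathCount, pathCount]
    split
    · next h =>
      subst h
      by_cases hR : x ∈ R
      · rw [if_pos (hmem.mpr hR), if_pos hR]
      · rw [if_neg (fun hh => hR (hmem.mp hh)), if_neg hR]
    · by_cases hR : x ∈ R
      · rw [if_pos (hmem.mpr hR), if_pos hR]
        apply Finset.sum_congr rfl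
        intro j _
        split
        · next hj =>
          apply ih
          · rw [update_sum hj]; omega
          · rw [update_sum hj]; omega
        · rfl
      · rw [if_neg (fun hh => hR (hmem.mp hh)), if_neg hR]
end UA

namespace UA

lemma pathCount_firststep {A : Set (Fin k → ℕ)} {a : Fin k → ℕ} (ha : a ∈ A) :
    ∀ (n : ℕ) (x : Fin k → ℕ), ∑ i, x i ≤ n → x ≠ a →
      pathCount A a x = ∑ i : Fin k, pathCount A (a + Pi.single i 1) x := by
  intro n
  induction n with
  | zero =>
    intro x hn hxa
    have hz : ∀ i : Fin k, ¬ (0 < x i) := fun i hi => by have := coord_le_sum x i; omega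
    have hR : ∀ i : Fin k, pathCount A (a + Pi.single i 1) x = 0 := by
      intro i
      apply pathCount_small (∑ i, x i) x le_rfl
      · rw [sum_add_single]; omega
      · intro h
        have h2 := sum_add_single a i
        rw [← h] at h2
        omega
    rw [pathCount, if_neg hxa]
    simp [hz, hR]
  | succ n ih =>
    intro x hn hxa
    by_cases hc : ∑ i, x i ≤ n
    · exact ih x hc hxa
    by_cases hA : x ∈ A
    · rw [pathCount, if_neg hxa, if_pos hA]
      have key : ∀ j : Fin k,
          (if _ : 0 < x j then pathCount A a (Function.update x j (x j - 1)) else 0)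
            = (∑ i : Fin k, if _ : 0 < x j then
                pathCount A (a + Pi.single i 1) (Function.update x j (x j - 1)) else 0)
              + (if x = a + Pi.single j 1 then 1 else 0) := by
        intro j
        by_cases hj : 0 < x j
        · simp only [dif_pos hj]
          by_cases hu : Function.update x j (x j - 1) = a
          · have hxe : x = a + Pi.single j 1 := by rw [← hu, update_add_single hj]
            rw [hu, if_pos hxe]
            rw [pathCount, if_pos rfl, if_pos ha]
            have hz : ∀ i : Fin k, pathCount A (a + Pi.single i 1) a = 0 := by
              intro i
              apply pathCount_small (∑ l, a l) a le_rfl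
              · rw [sum_add_single]; omega
              · intro h
                have h2 := sum_add_single a i
                rw [← h] at h2
                omega
            simp [hz]
          · have hsum_u : ∑ i, Function.update x j (x j - 1) i ≤ n := by
              rw [update_sum hj]; omega
            rw [ih _ hsum_u hu]
            have hne : x ≠ a + Pi.single j 1 := by
              intro h
              apply hu
              rw [h]
              exact update_of_add_single a j
            rw [if_neg hne, add_zero]
        · simp only [dif_neg hj]
          have hne : x ≠ a + Pi.single j 1 := by
            intro h
            apply hj
            rw [h]
            simp
          rw [if_neg hne]
          simp
      rw [Finset.sum_congr rfl (fun j _ => key j), Finset.sum_add_distrib]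
      have TR : ∀ i : Fin k, pathCount A (a + Pi.single i 1) x
          = (∑ j : Fin k, if _ : 0 < x j then
              pathCount A (a + Pi.single i 1) (Function.update x j (x j - 1)) else 0)
            + (if x = a + Pi.single i 1 then 1 else 0) := by
        intro i
        by_cases hxe : x = a + Pi.single i 1
        · have hA' : a + Pi.single i 1 ∈ A := hxe ▸ hA
          rw [if_pos hxe]
          rw [pathCount, if_pos hxe, if_pos hA']
          have hz : ∀ j : Fin k, (if _ : 0 < x j then
              pathCount A (a + Pi.single i 1) (Function.update x j (x j - 1)) else 0) = 0 := by
            intro j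
            by_cases hj : 0 < x j
            · rw [dif_pos hj]
              have h2 : ∑ l, (a + (Pi.single i 1 : Fin k → ℕ)) l = ∑ l, x l := by rw [← hxe]
              apply pathCount_small (∑ l, x l) (Function.update x j (x j - 1))
              · rw [update_sum hj]; omega
              · rw [update_sum hj, h2]; omega
              · intro h
                have h4 := update_sum (x := x) hj
                rw [h] at h4
                have h3 := coord_le_sum x j
                omega
            · rw [dif_neg hj]
          simp [hz]
        · rw [if_neg hxe, add_zero, pathCount, if_neg hxe, if_pos hA]
      rw [Finset.sum_congr rfl (fun i _ => TR i), Finset.sum_add_distrib]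
      congr 1
      exact Finset.sum_comm
    · rw [pathCount, if_neg hxa, if_neg hA]
      symm
      apply Finset.sum_eq_zero
      intro i _
      rw [pathCount]
      by_cases h : x = a + Pi.single i 1
      · rw [if_pos h, ← h, if_neg hA]
      · rw [if_neg h, if_neg hA]
end UA

namespace UA

lemma wp_pos {p : Fin k → ℝ} (hp : ∀ i, 0 < p i) (x : Fin k → ℕ) :
    0 < ∏ j, p j ^ x j :=
  Finset.prod_pos fun j _ => pow_pos (hp j) _

lemma wp_single (p : Fin k → ℝ) (i : Fin k) :
    ∏ j, p j ^ (Pi.single i 1 : Fin k → ℕ) j = p i := by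
  rw [Finset.prod_eq_single i]
  · simp
  · intro j _ hj
    rw [Pi.single_eq_of_ne hj]
    simp
  · simp

lemma wp_add_single (p : Fin k → ℝ) (x : Fin k → ℕ) (i : Fin k) :
    ∏ j, p j ^ (x + (Pi.single i 1 : Fin k → ℕ)) j = (∏ j, p j ^ x j) * p i := by
  have h : ∀ j : Fin k, p j ^ (x + (Pi.single i 1 : Fin k → ℕ)) j
      = p j ^ x j * p j ^ (Pi.single i 1 : Fin k → ℕ) j := by
    intro j
    rw [Pi.add_apply, pow_add]
  rw [Finset.prod_congr rfl (fun j _ => h j), Finset.prod_mul_distrib, wp_single]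

/-- Points of level `n` (sum of coordinates equals `n`). -/
noncomputable def lvl (k n : ℕ) : Finset (Fin k → ℕ) :=
  Finset.filter (fun x => ∑ j, x j = n) (Finset.Iic (fun _ => n))

/-- Points outside `R` of level at most `n`. -/
noncomputable def bnd (R : Set (Fin k → ℕ)) (n : ℕ) : Finset (Fin k → ℕ) :=
  Finset.filter (fun y => ∑ j, y j ≤ n ∧ y ∉ R) (Finset.Iic (fun _ => n))

lemma mem_lvl {n : ℕ} {x : Fin k → ℕ} : x ∈ lvl k n ↔ ∑ j, x j = n := by
  constructor
  · intro h; exact (Finset.mem_filter.mp h).2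
  · intro h
    refine Finset.mem_filter.mpr ⟨Finset.mem_Iic.mpr ?_, h⟩
    intro i
    show x i ≤ n
    have := coord_le_sum x i
    omega

lemma mem_bnd {R : Set (Fin k → ℕ)} {n : ℕ} {y : Fin k → ℕ} :
    y ∈ bnd R n ↔ ∑ j, y j ≤ n ∧ y ∉ R := by
  constructor
  · intro h; exact (Finset.mem_filter.mp h).2
  · intro h
    refine Finset.mem_filter.mpr ⟨Finset.mem_Iic.mpr ?_, h⟩
    intro i
    show y i ≤ n
    have := coord_le_sum y i
    omega

end UA

namespace UA

lemma w_eq {R : Set (Fin k → ℕ)} {a z : Fin k → ℕ} (hza : z ≠ a) :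
    (pathCount R a z + (if z ∈ R then 0 else exitCount R a z))
      = ∑ j, if _ : 0 < z j then pathCount R a (Function.update z j (z j - 1)) else 0 := by
  by_cases hzR : z ∈ R
  · rw [if_pos hzR, add_zero]
    conv_lhs => rw [pathCount]
    rw [if_neg hza, if_pos hzR]
  · rw [if_neg hzR]
    have hc0 : pathCount R a z = 0 := by
      rw [pathCount, if_neg hza, if_neg hzR]
    rw [hc0, zero_add, exitCount, pathCount, if_neg hza, if_pos (Set.mem_insert z R)]
    apply Finset.sum_congr rfl
    intro j _
    split
    · next hj =>
      have h1 := coord_le_sum z j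
      apply pathCount_insert (∑ l, z l)
      · rw [update_sum hj]; omega
      · rw [update_sum hj]; omega
    · rfl

lemma invariant {R : Set (Fin k → ℕ)} {a : Fin k → ℕ} (haR : a ∈ R)
    {p : Fin k → ℝ} (hp : ∀ i, 0 < p i) (hsum : ∑ i, p i = 1) (n : ℕ) :
    ((∑ x ∈ lvl k ((∑ i, a i) + n), (pathCount R a x : ℝ) * ∏ j, p j ^ x j)
      + ∑ y ∈ bnd R ((∑ i, a i) + n), (exitCount R a y : ℝ) * ∏ j, p j ^ y j)
      = ∏ j, p j ^ a j := by
  induction n with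
  | zero =>
    rw [Nat.add_zero]
    have hb : ∑ y ∈ bnd R (∑ i, a i), (exitCount R a y : ℝ) * ∏ j, p j ^ y j = 0 := by
      apply Finset.sum_eq_zero
      intro y hy
      rcases mem_bnd.mp hy with ⟨hle, hyR⟩
      have hya : y ≠ a := fun h => hyR (h ▸ haR)
      rw [exitCount, pathCount_small (∑ l, y l) y le_rfl hle hya]
      simp
    rw [hb, add_zero]
    have ha : a ∈ lvl k (∑ i, a i) := mem_lvl.mpr rfl
    rw [Finset.sum_eq_single_of_mem a ha]
    · rw [pathCount, if_pos rfl, if_pos haR]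
      simp
    · intro x hx hxa
      rw [pathCount_small (∑ l, x l) x le_rfl (le_of_eq (mem_lvl.mp hx)) hxa]
      simp
  | succ n ih =>
    set m := (∑ i, a i) + n with hm
    have hms : (∑ i, a i) + (n + 1) = m + 1 := rfl
    rw [hms]
    -- split the boundary sum
    have h1 : bnd R m = Finset.filter (fun y => ∑ j, y j ≤ m) (bnd R (m + 1)) := by
      ext y
      simp only [Finset.mem_filter]
      rw [mem_bnd, mem_bnd]
      constructor
      · rintro ⟨h1, h2⟩; exact ⟨⟨by omega, h2⟩, h1⟩
      · rintro ⟨⟨h1, h2⟩, h3⟩; exact ⟨h3, h2⟩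
    have h2 : Finset.filter (fun y => y ∉ R) (lvl k (m + 1))
        = Finset.filter (fun y => ¬ ∑ j, y j ≤ m) (bnd R (m + 1)) := by
      ext y
      simp only [Finset.mem_filter]
      rw [mem_bnd, mem_lvl]
      constructor
      · rintro ⟨h1, h2⟩; exact ⟨⟨by omega, h2⟩, by omega⟩
      · rintro ⟨⟨h1, h2⟩, h3⟩; exact ⟨by omega, h2⟩
    have hsplit : ∑ y ∈ bnd R (m + 1), (exitCount R a y : ℝ) * ∏ j, p j ^ y j
        = (∑ y ∈ bnd R m, (exitCount R a y : ℝ) * ∏ j, p j ^ y j)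
          + ∑ y ∈ Finset.filter (fun y => y ∉ R) (lvl k (m + 1)),
              (exitCount R a y : ℝ) * ∏ j, p j ^ y j := by
      rw [h1, h2]
      exact (Finset.sum_filter_add_sum_filter_not _ _ _).symm
    have key : (∑ x ∈ lvl k (m + 1), (pathCount R a x : ℝ) * ∏ j, p j ^ x j)
        + (∑ y ∈ Finset.filter (fun y => y ∉ R) (lvl k (m + 1)),
            (exitCount R a y : ℝ) * ∏ j, p j ^ y j)
        = ∑ x ∈ lvl k m, (pathCount R a x : ℝ) * ∏ j, p j ^ x j := by
      rw [Finset.sum_filter, ← Finset.sum_add_distrib]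
      have hterm : ∀ z ∈ lvl k (m + 1),
          ((pathCount R a z : ℝ) * ∏ j, p j ^ z j
            + if z ∉ R then (exitCount R a z : ℝ) * ∏ j, p j ^ z j else 0)
          = ∑ j : Fin k, (if _ : 0 < z j then
              (pathCount R a (Function.update z j (z j - 1)) : ℝ) else 0) * ∏ l, p l ^ z l := by
        intro z hz
        have hzm : ∑ l, z l = m + 1 := mem_lvl.mp hz
        have hza : z ≠ a := by
          intro h
          rw [h] at hzm
          omega
        have hw := w_eq (R := R) hza
        have : ((pathCount R a z + (if z ∈ R then 0 else exitCount R a z) : ℕ) : ℝ)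
            = ((∑ j, if _ : 0 < z j then pathCount R a (Function.update z j (z j - 1)) else 0 : ℕ) : ℝ) := by
          rw [hw]
        push_cast at this
        rw [← Finset.sum_mul]
        calc (pathCount R a z : ℝ) * ∏ j, p j ^ z j
              + (if z ∉ R then (exitCount R a z : ℝ) * ∏ j, p j ^ z j else 0)
            = ((pathCount R a z : ℝ) + if z ∈ R then 0 else (exitCount R a z : ℝ))
                * ∏ j, p j ^ z j := by
              by_cases hzR : z ∈ R <;> simp [hzR] <;> ring
          _ = _ := by
            rw [this]
            congr 1
            exact Finset.sum_congr rfl (fun j _ => by split <;> simp)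
      rw [Finset.sum_congr rfl hterm]
      -- exchange the double sum and reindex
      have hswap : ∑ z ∈ lvl k (m + 1), ∑ j : Fin k,
          (if _ : 0 < z j then
            (pathCount R a (Function.update z j (z j - 1)) : ℝ) else 0) * ∏ l, p l ^ z l
          = ∑ j : Fin k, ∑ z ∈ lvl k (m + 1),
            (if _ : 0 < z j then
              (pathCount R a (Function.update z j (z j - 1)) : ℝ) else 0) * ∏ l, p l ^ z l :=
        Finset.sum_comm
      rw [hswap]
      have hre : ∀ j : Fin k, ∑ z ∈ lvl k (m + 1),
          (if _ : 0 < z j then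
            (pathCount R a (Function.update z j (z j - 1)) : ℝ) else 0) * ∏ l, p l ^ z l
          = ∑ x ∈ lvl k m, ((pathCount R a x : ℝ) * ∏ l, p l ^ x l) * p j := by
        intro j
        have : ∀ z ∈ lvl k (m+1), (if _ : 0 < z j then
            (pathCount R a (Function.update z j (z j - 1)) : ℝ) else 0) * ∏ l, p l ^ z l
            = if 0 < z j then
                ((pathCount R a (Function.update z j (z j - 1)) : ℝ) * ∏ l, p l ^ z l) else 0 := by
          intro z _
          by_cases hj : 0 < z j <;> simp [hj]
        rw [Finset.sum_congr rfl this, ← Finset.sum_filter]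
        apply Finset.sum_nbij' (fun z => Function.update z j (z j - 1))
          (fun x => x + (Pi.single j 1 : Fin k → ℕ))
        · intro z hz
          rw [Finset.mem_filter] at hz
          rcases hz with ⟨hz, hj⟩
          apply mem_lvl.mpr
          rw [update_sum hj, mem_lvl.mp hz]
          omega
        · intro x hx
          rw [Finset.mem_filter]
          constructor
          · apply mem_lvl.mpr
            rw [sum_add_single, mem_lvl.mp hx]
          · show 0 < x j + (Pi.single j 1 : Fin k → ℕ) j
            simp
        · intro z hz
          rw [Finset.mem_filter] at hz
          exact update_add_single hz.2
        · intro x _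
          exact update_of_add_single x j
        · intro z hz
          rw [Finset.mem_filter] at hz
          rw [show (∏ l, p l ^ z l)
              = (∏ l, p l ^ (Function.update z j (z j - 1)) l) * p j from by
            conv_lhs => rw [← update_add_single hz.2]
            rw [wp_add_single]]
          ring
      rw [Finset.sum_congr rfl (fun j _ => hre j)]
      rw [← Finset.sum_comm]
      have : ∀ x ∈ lvl k m, ∑ j : Fin k, ((pathCount R a x : ℝ) * ∏ l, p l ^ x l) * p j
          = (pathCount R a x : ℝ) * ∏ l, p l ^ x l := by
        intro x _
        rw [← Finset.mul_sum, hsum, mul_one]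
      rw [Finset.sum_congr rfl this]
    rw [hsplit, ← ih]
    linarith [key]

end UA

namespace UA

lemma bnd_sum_le {R : Set (Fin k → ℕ)} {a : Fin k → ℕ} (haR : a ∈ R)
    {p : Fin k → ℝ} (hp : ∀ i, 0 < p i) (hsum : ∑ i, p i = 1) (n : ℕ) :
    ∑ y ∈ bnd R n, (exitCount R a y : ℝ) * ∏ j, p j ^ y j ≤ ∏ j, p j ^ a j := by
  have hmono : bnd R n ⊆ bnd R ((∑ i, a i) + n) := by
    intro y hy
    rw [mem_bnd] at hy ⊢
    exact ⟨by omega, hy.2⟩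
  have h := invariant haR hp hsum n
  have h2 : ∑ y ∈ bnd R n, (exitCount R a y : ℝ) * ∏ j, p j ^ y j
      ≤ ∑ y ∈ bnd R ((∑ i, a i) + n), (exitCount R a y : ℝ) * ∏ j, p j ^ y j :=
    Finset.sum_le_sum_of_subset_of_nonneg hmono
      (fun y _ _ => mul_nonneg (Nat.cast_nonneg _) (wp_pos hp y).le)
  have h3 : (0:ℝ) ≤ ∑ x ∈ lvl k ((∑ i, a i) + n), (pathCount R a x : ℝ) * ∏ j, p j ^ x j :=
    Finset.sum_nonneg fun x _ => mul_nonneg (Nat.cast_nonneg _) (wp_pos hp x).le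
  linarith

lemma tsum_bdry_le {R : Set (Fin k → ℕ)} {a : Fin k → ℕ} (haR : a ∈ R)
    {p : Fin k → ℝ} (hp : ∀ i, 0 < p i) (hsum : ∑ i, p i = 1) :
    Summable (fun y : bdry R =>
      (exitCount R a (y : Fin k → ℕ) : ℝ) * ∏ j, p j ^ (y : Fin k → ℕ) j)
    ∧ (∑' y : bdry R,
        (exitCount R a (y : Fin k → ℕ) : ℝ) * ∏ j, p j ^ (y : Fin k → ℕ) j)
      ≤ ∏ j, p j ^ a j := by
  have hnn : (0 : (bdry R) → ℝ) ≤ fun y : bdry R =>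
      (exitCount R a (y : Fin k → ℕ) : ℝ) * ∏ j, p j ^ (y : Fin k → ℕ) j :=
    fun y => mul_nonneg (Nat.cast_nonneg _) (wp_pos hp _).le
  have hb : ∀ s : Finset (bdry R),
      ∑ y ∈ s, (exitCount R a (y : Fin k → ℕ) : ℝ) * ∏ j, p j ^ (y : Fin k → ℕ) j
        ≤ ∏ j, p j ^ a j := by
    intro s
    set n := s.sup (fun y => ∑ j, (y : Fin k → ℕ) j) with hn
    have himg : ∑ y ∈ s.image Subtype.val, (exitCount R a y : ℝ) * ∏ j, p j ^ y j
        = ∑ y ∈ s, (exitCount R a (y : Fin k → ℕ) : ℝ) * ∏ j, p j ^ (y : Fin k → ℕ) j := by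
      rw [Finset.sum_image]
      intro x _ y _ hxy
      exact Subtype.ext hxy
    have hsub : s.image Subtype.val ⊆ bnd R n := by
      intro y hy
      rcases Finset.mem_image.mp hy with ⟨y', hy', rfl⟩
      refine mem_bnd.mpr ⟨?_, y'.2.1⟩
      exact Finset.le_sup (f := fun y : bdry R => ∑ j, (y : Fin k → ℕ) j) hy'
    rw [← himg]
    calc ∑ y ∈ s.image Subtype.val, (exitCount R a y : ℝ) * ∏ j, p j ^ y j
        ≤ ∑ y ∈ bnd R n, (exitCount R a y : ℝ) * ∏ j, p j ^ y j :=
          Finset.sum_le_sum_of_subset_of_nonneg hsub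
            (fun y _ _ => mul_nonneg (Nat.cast_nonneg _) (wp_pos hp y).le)
      _ ≤ ∏ j, p j ^ a j := bnd_sum_le haR hp hsum n
  have hsummable := summable_of_sum_le hnn hb
  exact ⟨hsummable, Summable.tsum_le_of_sum_le hsummable hb⟩

end UA


open UA

/-- If the accessible region `R` is closed, then for each `i`
the combinatorial identity `∑_{y ∈ B} kᵢ*(y) · p₁^{y₁} ⋯ p_k^{y_k} = pᵢ` holds. -/
theorem unbiased_identity {k : ℕ} (p : Fin k → ℝ) (hp : ∀ i, 0 < p i)
    (hsum : ∑ i, p i = 1) (R : Set (Fin k → ℕ)) (h0 : (0 : Fin k → ℕ) ∈ R)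
    (hclosed : ∑' y : bdry R,
      (exitCount R 0 (y : Fin k → ℕ) : ℝ) * ∏ j, p j ^ (y : Fin k → ℕ) j = 1)
    (i : Fin k) :
    ∑' y : bdry R,
        (exitCount R (Pi.single i 1) (y : Fin k → ℕ) : ℝ) *
          ∏ j, p j ^ (y : Fin k → ℕ) j
      = p i := by
  have hSi : ∀ i : Fin k,
      Summable (fun y : bdry R =>
        (exitCount R (Pi.single i 1) (y : Fin k → ℕ) : ℝ) * ∏ j, p j ^ (y : Fin k → ℕ) j)
      ∧ (∑' y : bdry R,
          (exitCount R (Pi.single i 1) (y : Fin k → ℕ) : ℝ) * ∏ j, p j ^ (y : Fin k → ℕ) j)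
        ≤ p i := by
    intro i
    by_cases hiR : (Pi.single i 1 : Fin k → ℕ) ∈ R
    · have h := tsum_bdry_le (a := Pi.single i 1) hiR hp hsum
      rwa [wp_single] at h
    · have hb : (Pi.single i 1 : Fin k → ℕ) ∈ bdry R :=
        ⟨hiR, 0, h0, i, (zero_add _).symm⟩
      have hzero : ∀ y : bdry R, y ≠ ⟨Pi.single i 1, hb⟩ →
          (exitCount R (Pi.single i 1) (y : Fin k → ℕ) : ℝ)
            * ∏ j, p j ^ (y : Fin k → ℕ) j = 0 := by
        intro y hy
        have hne : (Pi.single i 1 : Fin k → ℕ) ∉ insert (y : Fin k → ℕ) R := by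
          intro hmem
          rcases Set.mem_insert_iff.mp hmem with h | h
          · exact hy (Subtype.ext h.symm)
          · exact hiR h
        rw [exitCount, pathCount_not_mem hne (∑ l, (y : Fin k → ℕ) l) _ le_rfl]
        simp
      have hsummable : Summable (fun y : bdry R =>
          (exitCount R (Pi.single i 1) (y : Fin k → ℕ) : ℝ)
            * ∏ j, p j ^ (y : Fin k → ℕ) j) :=
        summable_of_ne_finset_zero (s := {⟨Pi.single i 1, hb⟩})
          (fun y hy => hzero y (by simpa using hy))
      refine ⟨hsummable, ?_⟩
      rw [tsum_eq_single (⟨Pi.single i 1, hb⟩ : bdry R) (fun y hy => hzero y hy)]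
      have h1 : exitCount R (Pi.single i 1) (Pi.single i 1) = 1 := by
        rw [exitCount, pathCount, if_pos rfl, if_pos (Set.mem_insert _ _)]
      simp only [h1]
      rw [wp_single]
      simp
  have hdecomp : ∀ y : bdry R,
      (exitCount R 0 (y : Fin k → ℕ) : ℝ) * ∏ j, p j ^ (y : Fin k → ℕ) j
        = ∑ i : Fin k, (exitCount R (Pi.single i 1) (y : Fin k → ℕ) : ℝ)
            * ∏ j, p j ^ (y : Fin k → ℕ) j := by
    intro y
    have hy0 : (y : Fin k → ℕ) ≠ 0 := fun h => y.2.1 (h ▸ h0)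
    have h0' : (0 : Fin k → ℕ) ∈ insert (y : Fin k → ℕ) R := Set.mem_insert_of_mem _ h0
    have hfs := pathCount_firststep h0' (∑ l, (y : Fin k → ℕ) l) (y : Fin k → ℕ) le_rfl hy0
    rw [exitCount, hfs]
    push_cast
    rw [Finset.sum_mul]
    apply Finset.sum_congr rfl
    intro l _
    rw [exitCount, zero_add]
  have hts : ∑ i : Fin k, ∑' y : bdry R,
      (exitCount R (Pi.single i 1) (y : Fin k → ℕ) : ℝ) * ∏ j, p j ^ (y : Fin k → ℕ) j = 1 := by
    rw [← Summable.tsum_finsetSum (fun i _ => (hSi i).1), ← hclosed]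
    exact tsum_congr fun y => (hdecomp y).symm
  exact (Finset.sum_eq_sum_iff_of_le (fun i _ => (hSi i).2)).1
    (by rw [hts, hsum]) i (Finset.mem_univ i)
end

section
/- Let R ⊂ ℕ^k be a simple region and n an order such that S_n^ℕ contains both points of R_n and points of B_n. Then for any nonempty collection C_n ⊂ B_n of boundary points there exist a point ȳ ∈ C_n, coefficients m_1, ..., m_k ∈ ℕ with at least one m_i = 0 and at least one m_i ≠ 0, and b ∈ ℕ, such that the linear form L(x) = m_1 x_1 + ... + m_k x_k satisfies: (i) L(ȳ) = b; (ii) L(x) ≥ b + 1 for every x ∈ R_n; (iii) L(y) ≥ b + 1 for every y ∈ C_n with y ≠ ȳ. -/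
open scoped Classical

/-- **separating-form lemma.** Let `R ⊆ ℕᵏ` be a simple region
and `n` an order such that `Sₙ` contains both accessible points (`Rₙ ≠ ∅`) and
boundary points (`Bₙ ≠ ∅`).  Then for any nonempty collection `Cₙ ⊆ Bₙ` there
are `ȳ ∈ Cₙ`, natural coefficients `m₁, …, m_k` (one vanishing, at least one
non-vanishing) and `b ∈ ℕ` such that `L(x) = ∑ mᵢ xᵢ` satisfies `L(ȳ) = b`,
`L ≥ b + 1` on `Rₙ` and `L ≥ b + 1` on `Cₙ \ {ȳ}`. -/
theorem separating_form_lemma {k : ℕ} (R : Set (Fin k → ℕ))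
    (h0 : (0 : Fin k → ℕ) ∈ R) (hsimple : IsSimple R) (n : ℕ)
    (hRn : ∃ x ∈ R, ∑ i, x i = n)
    (hBn : ∃ y ∈ bdry R, ∑ i, y i = n)
    (C : Set (Fin k → ℕ)) (hC : ∀ y ∈ C, y ∈ bdry R ∧ ∑ i, y i = n)
    (hCne : C.Nonempty) :
    ∃ ybar ∈ C, ∃ m : Fin k → ℕ, ∃ b : ℕ,
      (∃ i, m i = 0) ∧ (∃ i, m i ≠ 0) ∧
      (∑ i, m i * ybar i = b) ∧
      (∀ x ∈ R, ∑ i, x i = n → b + 1 ≤ ∑ i, m i * x i) ∧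
      (∀ y ∈ C, y ≠ ybar → b + 1 ≤ ∑ i, m i * y i) := by
  classical
  obtain ⟨y0, hy0C⟩ := hCne
  obtain ⟨⟨hy0R, x0, hx0R, i0, hy0eq⟩, hy0sum⟩ := hC y0 hy0C
  haveI : Nonempty (Fin k) := ⟨i0⟩
  set ι : (Fin k → ℕ) → (Fin k → ℝ) := fun z i => (z i : ℝ) with hιdef
  have ιinj : Function.Injective ι := by
    intro a b h
    funext i
    have h2 : (a i : ℝ) = (b i : ℝ) := congrFun h i
    exact_mod_cast h2
  set Rn : Set (Fin k → ℕ) := {z : Fin k → ℕ | z ∈ R ∧ ∑ i, z i = n} with hRndef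
  set P : Set (Fin k → ℕ) := Rn ∪ C with hPdef
  have hPsum : ∀ z ∈ P, ∑ i, z i = n := by
    rintro z (hz | hz)
    · exact hz.2
    · exact (hC z hz).2
  have hPfin : P.Finite := by
    have : P ⊆ Set.pi Set.univ (fun _ : Fin k => Set.Iic n) := by
      intro z hz i _
      have := hPsum z hz
      calc z i ≤ ∑ j, z j := Finset.single_le_sum (fun j _ => Nat.zero_le _) (Finset.mem_univ i)
        _ = n := this
    exact Set.Finite.subset (Set.Finite.pi fun _ => Set.finite_Iic n) this
  have hPfin' : (ι '' P).Finite := hPfin.image ι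
  set S : Set (Fin k → ℝ) := convexHull ℝ (ι '' P) with hSdef
  have hScomp : IsCompact S := hPfin'.isCompact_convexHull ℝ
  have hSconv : Convex ℝ S := convex_convexHull ℝ _
  have hextsub : S.extremePoints ℝ ⊆ ι '' P := extremePoints_convexHull_subset
  have hextfin : (S.extremePoints ℝ).Finite := hPfin'.subset hextsub
  have hSeq : convexHull ℝ (S.extremePoints ℝ) = S := by
    conv_rhs => rw [← closure_convexHull_extremePoints hScomp hSconv]
    rw [(hextfin.isClosed_convexHull ℝ).closure_eq]
  -- there is an extreme point coming from C
  have hexC : ∃ ybar ∈ C, ι ybar ∈ S.extremePoints ℝ := by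
    by_contra h
    push_neg at h
    have hsub : S.extremePoints ℝ ⊆ ι '' Rn := by
      intro w hw
      rcases hextsub hw with ⟨z, hz, rfl⟩
      rcases hz with hz | hz
      · exact ⟨z, hz, rfl⟩
      · exact absurd hw (h z hz)
    have hmem : ι y0 ∈ convexHull ℝ (ι '' Rn) := by
      have h1 : ι y0 ∈ S := subset_convexHull ℝ _ ⟨y0, Or.inr hy0C, rfl⟩
      rw [← hSeq] at h1
      exact convexHull_mono hsub h1
    exact hy0R (hsimple n y0 hy0sum hmem)
  obtain ⟨ybar, hybarC, hybarExt⟩ := hexC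
  have hybarR : ybar ∉ R := (hC ybar hybarC).1.1
  have hybarsum : ∑ i, ybar i = n := (hC ybar hybarC).2
  -- ybar is not in the hull of the other points
  have hnotin : ι ybar ∉ convexHull ℝ (ι '' P \ {ι ybar}) := by
    have h1 := (hSconv.mem_extremePoints_iff_mem_diff_convexHull_diff).1 hybarExt
    intro hcon
    exact h1.2 (convexHull_mono
      (Set.diff_subset_diff_left (subset_convexHull ℝ _)) hcon)
  -- separate
  obtain ⟨f, u, hfw, hfu⟩ := geometric_hahn_banach_point_closed
    (convex_convexHull ℝ _)
    ((hPfin'.subset Set.diff_subset).isClosed_convexHull ℝ) hnotin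
  set c : Fin k → ℝ := fun i => f (fun j => if i = j then (1 : ℝ) else 0) with hcdef
  have hf_eq : ∀ x : Fin k → ℝ, f x = ∑ i, x i * c i := by
    intro x
    have hx : f x = f (∑ i, x i • fun j => if i = j then (1 : ℝ) else 0) := by
      rw [← pi_eq_sum_univ]
    rw [hx, map_sum]
    refine Finset.sum_congr rfl fun i _ => ?_
    rw [f.map_smul, smul_eq_mul]
  set δ : ℝ := u - f (ι ybar) with hδdef
  have hδpos : 0 < δ := by simp [hδdef]; linarith
  obtain ⟨N, hN⟩ := exists_nat_gt ((n + 1) / δ)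
  have hNδ : (n : ℝ) + 1 < N * δ := by
    rw [div_lt_iff₀ hδpos] at hN
    linarith
  have hNpos : (0 : ℝ) < N := by
    have : (0 : ℝ) ≤ (n + 1) / δ := by positivity
    linarith
  set z : Fin k → ℤ := fun i => ⌈c i * N⌉ with hzdef
  set A : (Fin k → ℕ) → ℤ := fun x => ∑ i, z i * (x i : ℤ) with hAdef
  have hA_ge : ∀ x : Fin k → ℕ, (N : ℝ) * f (ι x) ≤ ((A x : ℤ) : ℝ) := by
    intro x
    rw [hf_eq, Finset.mul_sum]
    push_cast [hAdef]
    refine Finset.sum_le_sum fun i _ => ?_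
    have h1 : c i * N ≤ ((z i : ℤ) : ℝ) := Int.le_ceil _
    have h2 : (0 : ℝ) ≤ (x i : ℝ) := Nat.cast_nonneg _
    have : ι x i = (x i : ℝ) := rfl
    rw [this]
    nlinarith
  have hA_le : ∀ x : Fin k → ℕ, ∑ i, x i = n →
      ((A x : ℤ) : ℝ) ≤ (N : ℝ) * f (ι x) + n := by
    intro x hx
    rw [hf_eq, Finset.mul_sum]
    have hsum : (n : ℝ) = ∑ i, (x i : ℝ) := by
      rw [← hx]; push_cast; ring
    rw [hsum, ← Finset.sum_add_distrib]
    push_cast [hAdef]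
    refine Finset.sum_le_sum fun i _ => ?_
    have h1 : ((z i : ℤ) : ℝ) < c i * N + 1 := Int.ceil_lt_add_one _
    have h2 : (0 : ℝ) ≤ (x i : ℝ) := Nat.cast_nonneg _
    have : ι x i = (x i : ℝ) := rfl
    rw [this]
    nlinarith
  -- the key strict inequality
  have hkey : ∀ p ∈ P, p ≠ ybar → A ybar + 1 ≤ A p := by
    intro p hp hne
    have hιne : ι p ≠ ι ybar := fun hcon => hne (ιinj hcon)
    have h1 : u < f (ι p) :=
      hfu _ (subset_convexHull ℝ _ ⟨⟨p, hp, rfl⟩, hιne⟩)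
    have h2 := hA_le ybar hybarsum
    have h3 := hA_ge p
    have h4 : (N : ℝ) * u ≤ (N : ℝ) * f (ι p) := by nlinarith
    have h5 : ((A ybar : ℤ) : ℝ) < ((A p : ℤ) : ℝ) := by
      have : (N : ℝ) * f (ι ybar) = N * u - N * δ := by rw [hδdef]; ring
      nlinarith
    exact_mod_cast h5
  -- shift coefficients to naturals
  obtain ⟨i1, -, hi1⟩ := Finset.exists_min_image Finset.univ z Finset.univ_nonempty
  set m : Fin k → ℕ := fun i => (z i - z i1).toNat with hmdef
  have hmz : ∀ i, (m i : ℤ) = z i - z i1 := fun i =>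
    Int.toNat_of_nonneg (sub_nonneg.2 (hi1 i (Finset.mem_univ i)))
  have hL : ∀ x : Fin k → ℕ, ∑ i, x i = n →
      ((∑ i, m i * x i : ℕ) : ℤ) = A x - z i1 * n := by
    intro x hx
    have : ((∑ i, m i * x i : ℕ) : ℤ) = ∑ i, (z i - z i1) * (x i : ℤ) := by
      push_cast
      exact Finset.sum_congr rfl fun i _ => by rw [hmz]
    rw [this]
    have hxc : ((n : ℕ) : ℤ) = ∑ i, (x i : ℤ) := by rw [← hx]; push_cast; ring
    simp only [sub_mul, Finset.sum_sub_distrib, ← Finset.mul_sum, hAdef, ← hxc]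
  have hRineq : ∀ x ∈ R, ∑ i, x i = n →
      (∑ i, m i * ybar i) + 1 ≤ ∑ i, m i * x i := by
    intro x hxR hx
    have hne : x ≠ ybar := fun hcon => hybarR (hcon ▸ hxR)
    have h1 := hkey x (Or.inl ⟨hxR, hx⟩) hne
    have e1 := hL ybar hybarsum
    have e2 := hL x hx
    omega
  refine ⟨ybar, hybarC, m, ∑ i, m i * ybar i, ⟨i1, ?_⟩, ?_, rfl, hRineq, ?_⟩
  · simp [hmdef]
  · by_contra h
    push_neg at h
    obtain ⟨x1, hx1R, hx1sum⟩ := hRn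
    have := hRineq x1 hx1R hx1sum
    simp [h] at this
  · intro y hyC hne
    have h1 := hkey y (Or.inr hyC) hne
    have e1 := hL ybar hybarsum
    have e2 := hL y (hC y hyC).2
    omega
end

section
/- Let b > 0 and let y = (y_1, y_2, y_3) ∈ ℕ³ with y_1 - y_3 = b, and set n = y_1 + y_2 + y_3. With k(y) the number of lattice paths from the origin to y all of whose points except y satisfy x_1 - x_3 < b, k_1*(y) the number of such paths starting from e_1 = (1,0,0), and k_2*(y) the number of such paths starting from e_2 = (0,1,0), the identities b · (n-1) · k_1*(y) = (b-1) · y_1 · k(y) and (n-1) · k_2*(y) = y_2 · k(y) hold; equivalently, k_1*(y)/k(y) = ((b-1)/b) · y_1/(n-1) and k_2*(y)/k(y) = y_2/(n-1). -/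
open scoped Classical

def m3 (a b c : ℕ) : ℕ := (a+b+c).choose a * (b+c).choose b

lemma m3_spec (a b c : ℕ) : m3 a b c * (a.factorial * (b.factorial * c.factorial)) = (a+b+c).factorial := by
  have h1 : (b+c).choose b * (b.factorial * c.factorial) = (b+c).factorial := by
    have := Nat.choose_mul_factorial_mul_factorial (show b ≤ b + c by omega)
    have e : b + c - b = c := by omega
    rw [e] at this
    rw [← this]; ring
  have h2 : (a+b+c).choose a * (a.factorial * (b+c).factorial) = (a+b+c).factorial := by
    have := Nat.choose_mul_factorial_mul_factorial (show a ≤ a + b + c by omega)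
    have e : a + b + c - a = b + c := by omega
    rw [e] at this
    rw [← this]; ring
  calc m3 a b c * (a.factorial * (b.factorial * c.factorial))
      = (a+b+c).choose a * (a.factorial * ((b+c).choose b * (b.factorial * c.factorial))) := by
        simp [m3]; ring
    _ = (a+b+c).choose a * (a.factorial * (b+c).factorial) := by rw [h1]
    _ = (a+b+c).factorial := h2

lemma m3_symm (a b c : ℕ) : m3 a b c = m3 c b a := by
  have h1 := m3_spec a b c
  have h2 := m3_spec c b a
  have e : c + b + a = a + b + c := by omega
  rw [e] at h2
  have hpos : 0 < a.factorial * (b.factorial * c.factorial) := by positivity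
  apply Nat.eq_of_mul_eq_mul_right hpos
  rw [h1, ← h2]; ring

lemma m3_succ_left (a b c : ℕ) : (a+1+b+c) * m3 a b c = (a+1) * m3 (a+1) b c := by
  have hpos : 0 < a.factorial * (b.factorial * c.factorial) := by positivity
  apply Nat.eq_of_mul_eq_mul_right hpos
  have h1 := m3_spec a b c
  have h2 := m3_spec (a+1) b c
  calc (a+1+b+c) * m3 a b c * (a.factorial * (b.factorial * c.factorial))
      = (a+1+b+c) * ((a+b+c).factorial) := by rw [mul_assoc, h1]
    _ = (a+b+c+1).factorial := by
        rw [Nat.factorial_succ]; ring_nf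
    _ = (a+1+b+c).factorial := by ring_nf
    _ = m3 (a+1) b c * ((a+1).factorial * (b.factorial * c.factorial)) := (h2).symm
    _ = (a+1) * m3 (a+1) b c * (a.factorial * (b.factorial * c.factorial)) := by
        rw [Nat.factorial_succ]; ring

lemma m3_succ_mid (a b c : ℕ) : (a+(b+1)+c) * m3 a b c = (b+1) * m3 a (b+1) c := by
  have hpos : 0 < a.factorial * (b.factorial * c.factorial) := by positivity
  apply Nat.eq_of_mul_eq_mul_right hpos
  have h1 := m3_spec a b c
  have h2 := m3_spec a (b+1) c
  calc (a+(b+1)+c) * m3 a b c * (a.factorial * (b.factorial * c.factorial))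
      = (a+(b+1)+c) * ((a+b+c).factorial) := by rw [mul_assoc, h1]
    _ = (a+b+c+1).factorial := by rw [Nat.factorial_succ]; ring_nf
    _ = (a+(b+1)+c).factorial := by ring_nf
    _ = m3 a (b+1) c * (a.factorial * ((b+1).factorial * c.factorial)) := (h2).symm
    _ = (b+1) * m3 a (b+1) c * (a.factorial * (b.factorial * c.factorial)) := by
        rw [Nat.factorial_succ]; ring

lemma m3_succ_right (a b c : ℕ) : (a+b+(c+1)) * m3 a b c = (c+1) * m3 a b (c+1) := by
  have hpos : 0 < a.factorial * (b.factorial * c.factorial) := by positivity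
  apply Nat.eq_of_mul_eq_mul_right hpos
  have h1 := m3_spec a b c
  have h2 := m3_spec a b (c+1)
  calc (a+b+(c+1)) * m3 a b c * (a.factorial * (b.factorial * c.factorial))
      = (a+b+(c+1)) * ((a+b+c).factorial) := by rw [mul_assoc, h1]
    _ = (a+b+c+1).factorial := by rw [Nat.factorial_succ]; ring_nf
    _ = (a+b+(c+1)).factorial := by ring_nf
    _ = m3 a b (c+1) * (a.factorial * (b.factorial * (c+1).factorial)) := (h2).symm
    _ = (c+1) * m3 a b (c+1) * (a.factorial * (b.factorial * c.factorial)) := by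
        rw [Nat.factorial_succ]; ring

lemma m3_pas3 (a b c : ℕ) : m3 (a+1) (b+1) (c+1)
    = m3 a (b+1) (c+1) + m3 (a+1) b (c+1) + m3 (a+1) (b+1) c := by
  simp only [m3]
  have e1 : a+1+(b+1)+(c+1) = (a+(b+1)+(c+1))+1 := by omega
  have e2 : b+1+(c+1) = (b+(c+1))+1 := by omega
  have e3 : a+(b+1)+(c+1) = a+1+b+(c+1) := by omega
  have e4 : a+1+b+(c+1) = a+1+(b+1)+c := by omega
  have e5 : b+(c+1) = b+1+c := by omega
  rw [e1, e2, Nat.choose_succ_succ (a+(b+1)+(c+1)) a, Nat.choose_succ_succ (b+(c+1)) b,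
    e3, e4, e5]
  ring

lemma m3_pas_ab (a b : ℕ) : m3 (a+1) (b+1) 0 = m3 a (b+1) 0 + m3 (a+1) b 0 := by
  simp only [m3, Nat.add_zero, Nat.choose_self]
  have e1 : a+1+(b+1) = (a+(b+1))+1 := by omega
  have e2 : a+(b+1) = a+1+b := by omega
  rw [e1, Nat.choose_succ_succ (a+(b+1)) a, e2]
  ring

lemma m3_pas_ac (a c : ℕ) : m3 (a+1) 0 (c+1) = m3 a 0 (c+1) + m3 (a+1) 0 c := by
  simp only [m3, Nat.zero_add, Nat.choose_zero_right]
  have e1 : a+1+0+(c+1) = (a+0+(c+1))+1 := by omega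
  have e2 : a+0+(c+1) = a+1+0+c := by omega
  rw [e1, Nat.choose_succ_succ (a+0+(c+1)) a, e2]
  ring

lemma m3_pas_bc (b c : ℕ) : m3 0 (b+1) (c+1) = m3 0 b (c+1) + m3 0 (b+1) c := by
  simp only [m3, Nat.zero_add, Nat.choose_zero_right]
  have e2 : b+1+(c+1) = (b+(c+1))+1 := by omega
  have e5 : b+(c+1) = b+1+c := by omega
  rw [e2, Nat.choose_succ_succ (b+(c+1)) b, e5, one_mul, one_mul, one_mul]

lemma m3_a (a : ℕ) : m3 (a+1) 0 0 = m3 a 0 0 := by simp [m3]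
lemma m3_b (b : ℕ) : m3 0 (b+1) 0 = m3 0 b 0 := by simp [m3]
lemma m3_c (c : ℕ) : m3 0 0 (c+1) = m3 0 0 c := by simp [m3]
lemma m3_zero : m3 0 0 0 = 1 := by simp [m3]

def Mz (a b c : ℤ) : ℤ :=
  if 0 ≤ a ∧ 0 ≤ b ∧ 0 ≤ c then m3 a.toNat b.toNat c.toNat else 0

lemma Mz_natCast (p q r : ℕ) : Mz p q r = m3 p q r := by
  simp [Mz]

lemma Mz_neg₁ {a : ℤ} (h : a < 0) (b c : ℤ) : Mz a b c = 0 := by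
  simp [Mz]; omega

lemma Mz_neg₂ (a : ℤ) {b : ℤ} (h : b < 0) (c : ℤ) : Mz a b c = 0 := by
  simp [Mz]; omega

lemma Mz_neg₃ (a b : ℤ) {c : ℤ} (h : c < 0) : Mz a b c = 0 := by
  simp [Mz]; omega

lemma Mz_symm (a b c : ℤ) : Mz a b c = Mz c b a := by
  unfold Mz
  by_cases h : 0 ≤ a ∧ 0 ≤ b ∧ 0 ≤ c
  · rw [if_pos h, if_pos ⟨h.2.2, h.2.1, h.1⟩]
    exact_mod_cast m3_symm a.toNat b.toNat c.toNat
  · rw [if_neg h, if_neg (by tauto)]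

lemma Mz_zero : Mz 0 0 0 = 1 := by simp [Mz, m3]

lemma Mz_succ_left (a b c : ℤ) : (a+1+b+c) * Mz a b c = (a+1) * Mz (a+1) b c := by
  by_cases hb : 0 ≤ b; swap
  · rw [Mz_neg₂ _ (by omega), Mz_neg₂ _ (by omega)]; ring
  by_cases hc : 0 ≤ c; swap
  · rw [Mz_neg₃ _ _ (by omega), Mz_neg₃ _ _ (by omega)]; ring
  by_cases ha : 0 ≤ a; swap
  · rw [Mz_neg₁ (by omega)]
    rcases lt_or_eq_of_le (show a + 1 ≤ 0 by omega) with h | h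
    · rw [Mz_neg₁ (by omega)]; ring
    · rw [h]; ring
  · lift a to ℕ using ha; lift b to ℕ using hb; lift c to ℕ using hc
    have e : ((a:ℤ)+1) = ((a+1 : ℕ) : ℤ) := by push_cast; ring
    rw [e, Mz_natCast, Mz_natCast]
    push_cast
    exact_mod_cast congrArg (Nat.cast : ℕ → ℤ) (m3_succ_left a b c)

lemma Mz_succ_mid (a b c : ℤ) : (a+(b+1)+c) * Mz a b c = (b+1) * Mz a (b+1) c := by
  by_cases ha : 0 ≤ a; swap
  · rw [Mz_neg₁ (by omega), Mz_neg₁ (by omega)]; ring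
  by_cases hc : 0 ≤ c; swap
  · rw [Mz_neg₃ _ _ (by omega), Mz_neg₃ _ _ (by omega)]; ring
  by_cases hb : 0 ≤ b; swap
  · rw [Mz_neg₂ _ (by omega)]
    rcases lt_or_eq_of_le (show b + 1 ≤ 0 by omega) with h | h
    · rw [Mz_neg₂ _ (by omega)]; ring
    · rw [h]; ring
  · lift a to ℕ using ha; lift b to ℕ using hb; lift c to ℕ using hc
    have e : ((b:ℤ)+1) = ((b+1 : ℕ) : ℤ) := by push_cast; ring
    rw [e, Mz_natCast, Mz_natCast]
    push_cast
    exact_mod_cast congrArg (Nat.cast : ℕ → ℤ) (m3_succ_mid a b c)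

lemma Mz_succ_right (a b c : ℤ) : (a+b+(c+1)) * Mz a b c = (c+1) * Mz a b (c+1) := by
  by_cases ha : 0 ≤ a; swap
  · rw [Mz_neg₁ (by omega), Mz_neg₁ (by omega)]; ring
  by_cases hb : 0 ≤ b; swap
  · rw [Mz_neg₂ _ (by omega), Mz_neg₂ _ (by omega)]; ring
  by_cases hc : 0 ≤ c; swap
  · rw [Mz_neg₃ _ _ (by omega)]
    rcases lt_or_eq_of_le (show c + 1 ≤ 0 by omega) with h | h
    · rw [Mz_neg₃ _ _ (by omega)]; ring
    · rw [h]; ring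
  · lift a to ℕ using ha; lift b to ℕ using hb; lift c to ℕ using hc
    have e : ((c:ℤ)+1) = ((c+1 : ℕ) : ℤ) := by push_cast; ring
    rw [e, Mz_natCast, Mz_natCast]
    push_cast
    exact_mod_cast congrArg (Nat.cast : ℕ → ℤ) (m3_succ_right a b c)


lemma m3_rec {p q r : ℕ} (h : p + q + r ≠ 0) :
    m3 p q r = (if p = 0 then 0 else m3 (p-1) q r) + (if q = 0 then 0 else m3 p (q-1) r)
      + (if r = 0 then 0 else m3 p q (r-1)) := by
  rcases p with _ | p <;> rcases q with _ | q <;> rcases r with _ | r <;>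
    simp [Nat.succ_sub_one]
  · exact absurd (by simp) h
  · exact m3_c r
  · exact m3_b q
  · exact m3_pas_bc q r
  · exact m3_a p
  · exact m3_pas_ac p r
  · exact m3_pas_ab p q
  · exact m3_pas3 p q r

lemma Mz_pred_left (p q r : ℕ) : Mz ((p:ℤ) - 1) q r
    = if p = 0 then 0 else ((m3 (p-1) q r : ℕ) : ℤ) := by
  rcases p with _ | p
  · rw [Mz_neg₁ (by norm_num)]; simp
  · have e : ((p+1:ℕ):ℤ) - 1 = ((p:ℕ):ℤ) := by push_cast; ring
    rw [e, Mz_natCast]; simp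

lemma Mz_pred_mid (p q r : ℕ) : Mz (p:ℤ) ((q:ℤ) - 1) r
    = if q = 0 then 0 else ((m3 p (q-1) r : ℕ) : ℤ) := by
  rcases q with _ | q
  · rw [Mz_neg₂ _ (by norm_num)]; simp
  · have e : ((q+1:ℕ):ℤ) - 1 = ((q:ℕ):ℤ) := by push_cast; ring
    rw [e, Mz_natCast]; simp

lemma Mz_pred_right (p q r : ℕ) : Mz (p:ℤ) (q:ℤ) ((r:ℤ) - 1)
    = if r = 0 then 0 else ((m3 p q (r-1) : ℕ) : ℤ) := by
  rcases r with _ | r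
  · rw [Mz_neg₃ _ _ (by norm_num)]; simp
  · have e : ((r+1:ℕ):ℤ) - 1 = ((r:ℕ):ℤ) := by push_cast; ring
    rw [e, Mz_natCast]; simp

lemma Mz_rec {a b c : ℤ} (h : ¬(a = 0 ∧ b = 0 ∧ c = 0)) :
    Mz a b c = Mz (a-1) b c + Mz a (b-1) c + Mz a b (c-1) := by
  by_cases ha : 0 ≤ a; swap
  · rw [Mz_neg₁ (by omega), Mz_neg₁ (by omega), Mz_neg₁ (by omega), Mz_neg₁ (by omega)]; ring
  by_cases hb : 0 ≤ b; swap
  · rw [Mz_neg₂ _ (by omega), Mz_neg₂ _ (by omega), Mz_neg₂ _ (by omega), Mz_neg₂ _ (by omega)]; ring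
  by_cases hc : 0 ≤ c; swap
  · rw [Mz_neg₃ _ _ (by omega), Mz_neg₃ _ _ (by omega), Mz_neg₃ _ _ (by omega), Mz_neg₃ _ _ (by omega)]; ring
  lift a to ℕ using ha; lift b to ℕ using hb; lift c to ℕ using hc
  have h' : a + b + c ≠ 0 := by
    intro h0
    exact h ⟨by exact_mod_cast (by omega : a = 0), by exact_mod_cast (by omega : b = 0),
      by exact_mod_cast (by omega : c = 0)⟩
  rw [Mz_natCast, Mz_pred_left, Mz_pred_mid, Mz_pred_right, m3_rec h']
  push_cast
  ring

lemma sum_update_pred {k : ℕ} (x : Fin k → ℕ) (i : Fin k) (h : 0 < x i) :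
    ∑ j, Function.update x i (x i - 1) j = (∑ j, x j) - 1 := by
  have h1 := Finset.sum_update_of_mem (Finset.mem_univ i) x (x i - 1)
  have h2 := Finset.sum_eq_sum_sdiff_singleton_add (Finset.mem_univ i) x
  omega

lemma sum_pos_of_pos {k : ℕ} (x : Fin k → ℕ) (i : Fin k) (h : 0 < x i) :
    0 < ∑ j, x j := by
  have h2 := Finset.sum_eq_sum_sdiff_singleton_add (Finset.mem_univ i) x
  omega

lemma pathCount_notmem_end {k : ℕ} {A : Set (Fin k → ℕ)} (a : Fin k → ℕ)
    {x : Fin k → ℕ} (hx : x ∉ A) : pathCount A a x = 0 := by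
  rw [pathCount]
  by_cases hxa : x = a
  · rw [if_pos hxa, if_neg (hxa ▸ hx)]
  · rw [if_neg hxa, if_neg hx]

lemma pathCount_notmem_start {k : ℕ} {A : Set (Fin k → ℕ)} {a : Fin k → ℕ}
    (ha : a ∉ A) (x : Fin k → ℕ) : pathCount A a x = 0 := by
  generalize hN : (∑ i, x i) = N
  induction N using Nat.strong_induction_on generalizing x with
  | _ N ih =>
    rw [pathCount]
    by_cases hxa : x = a
    · rw [if_pos hxa, if_neg ha]
    · rw [if_neg hxa]
      by_cases hm : x ∈ A
      · rw [if_pos hm]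
        apply Finset.sum_eq_zero
        intro i _
        by_cases hi : 0 < x i
        · rw [dif_pos hi]
          exact ih ((∑ j, x j) - 1) (by have := sum_pos_of_pos x i hi; omega) _
            (sum_update_pred x i hi) |>.symm ▸ rfl
        · rw [dif_neg hi]
      · rw [if_neg hm]

lemma pathCount_congr_s14 {k : ℕ} {A B : Set (Fin k → ℕ)} (a : Fin k → ℕ)
    (x : Fin k → ℕ) (h : ∀ z : Fin k → ℕ, (∑ i, z i) ≤ ∑ i, x i → (z ∈ A ↔ z ∈ B)) :
    pathCount A a x = pathCount B a x := by
  suffices H : ∀ N (x : Fin k → ℕ), (∑ i, x i) = N →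
      (∀ z : Fin k → ℕ, (∑ i, z i) ≤ N → (z ∈ A ↔ z ∈ B)) →
      pathCount A a x = pathCount B a x from H _ x rfl h
  intro N
  induction N using Nat.strong_induction_on with
  | _ N ih =>
    intro x hN h
    rw [pathCount, pathCount]
    by_cases hxa : x = a
    · have hax := h a (by rw [← hxa]; omega)
      rw [if_pos hxa, if_pos hxa]
      by_cases hA : a ∈ A
      · rw [if_pos hA, if_pos (hax.mp hA)]
      · rw [if_neg hA, if_neg (fun hB => hA (hax.mpr hB))]
    · have hx := h x (le_of_eq hN)
      rw [if_neg hxa, if_neg hxa]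
      by_cases hm : x ∈ A
      · rw [if_pos hm, if_pos (hx.mp hm)]
        apply Finset.sum_congr rfl
        intro i _
        by_cases hi : 0 < x i
        · rw [dif_pos hi, dif_pos hi]
          have hs := sum_update_pred x i hi
          have hp := sum_pos_of_pos x i hi
          exact ih (N-1) (by omega) _ (by omega) (fun z hz => h z (by omega))
        · rw [dif_neg hi, dif_neg hi]
      · rw [if_neg hm, if_neg (fun hB => hm (hx.mpr hB))]

lemma pathCount_formula (b : ℤ) (a : Fin 3 → ℕ) (ha : (a 0:ℤ) - (a 2:ℤ) < b) :
    ∀ N (x : Fin 3 → ℕ), (∑ i, x i) = N → (x 0:ℤ) - (x 2:ℤ) ≤ b →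
    (pathCount {z : Fin 3 → ℕ | (z 0:ℤ) - (z 2:ℤ) < b} a x : ℤ)
      = Mz ((x 0:ℤ) - (a 0:ℤ)) ((x 1:ℤ) - (a 1:ℤ)) ((x 2:ℤ) - (a 2:ℤ))
        - Mz ((x 0:ℤ) - (a 0:ℤ) - (b - ((a 0:ℤ) - (a 2:ℤ)))) ((x 1:ℤ) - (a 1:ℤ))
            ((x 2:ℤ) - (a 2:ℤ) + (b - ((a 0:ℤ) - (a 2:ℤ)))) := by
  intro N
  induction N using Nat.strong_induction_on with
  | _ N ih =>
  intro x hN hxb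
  rw [pathCount]
  by_cases hxa : x = a
  · have haA : a ∈ {z : Fin 3 → ℕ | (z 0:ℤ) - (z 2:ℤ) < b} := ha
    rw [if_pos hxa, if_pos haA]
    rw [hxa]
    simp only [sub_self]
    rw [Mz_zero, Mz_neg₁ (show (0:ℤ) - (b - ((a 0:ℤ) - (a 2:ℤ))) < 0 by omega)]
    norm_num
  · rw [if_neg hxa]
    by_cases hm : x ∈ {z : Fin 3 → ℕ | (z 0:ℤ) - (z 2:ℤ) < b}
    · have hm' : (x 0:ℤ) - (x 2:ℤ) < b := hm
      rw [if_pos hm]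
      have hNpos : ∀ i : Fin 3, 0 < x i → 0 < N := fun i hi => hN ▸ sum_pos_of_pos x i hi
      have t0 : ((if h : 0 < x 0 then
            pathCount {z : Fin 3 → ℕ | (z 0:ℤ) - (z 2:ℤ) < b} a
              (Function.update x 0 (x 0 - 1)) else 0 : ℕ) : ℤ)
          = Mz ((x 0:ℤ) - (a 0:ℤ) - 1) ((x 1:ℤ) - (a 1:ℤ)) ((x 2:ℤ) - (a 2:ℤ))
            - Mz ((x 0:ℤ) - (a 0:ℤ) - (b - ((a 0:ℤ) - (a 2:ℤ))) - 1) ((x 1:ℤ) - (a 1:ℤ))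
              ((x 2:ℤ) - (a 2:ℤ) + (b - ((a 0:ℤ) - (a 2:ℤ)))) := by
        by_cases h0 : 0 < x 0
        · rw [dif_pos h0]
          have hu0 : (Function.update x 0 (x 0 - 1)) 0 = x 0 - 1 := by simp [Function.update_apply]
          have hu1 : (Function.update x 0 (x 0 - 1)) 1 = x 1 := by simp [Function.update_apply]
          have hu2 : (Function.update x 0 (x 0 - 1)) 2 = x 2 := by simp [Function.update_apply]
          have hsum : ∑ j, (Function.update x 0 (x 0 - 1)) j = N - 1 := by
            rw [sum_update_pred x 0 h0, hN]
          rw [ih (N-1) (by have := hNpos 0 h0; omega) _ hsum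
            (by rw [hu0, hu2]; push_cast [h0]; omega), hu0, hu1, hu2]
          have hc : ((x 0 - 1 : ℕ) : ℤ) = (x 0:ℤ) - 1 := by omega
          rw [hc]
          congr 1
          · congr 1 <;> ring
          · congr 1 <;> ring
        · rw [dif_neg h0, Mz_neg₁ (by omega), Mz_neg₁ (by omega)]
          norm_num
      have t1 : ((if h : 0 < x 1 then
            pathCount {z : Fin 3 → ℕ | (z 0:ℤ) - (z 2:ℤ) < b} a
              (Function.update x 1 (x 1 - 1)) else 0 : ℕ) : ℤ)
          = Mz ((x 0:ℤ) - (a 0:ℤ)) ((x 1:ℤ) - (a 1:ℤ) - 1) ((x 2:ℤ) - (a 2:ℤ))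
            - Mz ((x 0:ℤ) - (a 0:ℤ) - (b - ((a 0:ℤ) - (a 2:ℤ)))) ((x 1:ℤ) - (a 1:ℤ) - 1)
              ((x 2:ℤ) - (a 2:ℤ) + (b - ((a 0:ℤ) - (a 2:ℤ)))) := by
        by_cases h1 : 0 < x 1
        · rw [dif_pos h1]
          have hu0 : (Function.update x 1 (x 1 - 1)) 0 = x 0 := by simp [Function.update_apply]
          have hu1 : (Function.update x 1 (x 1 - 1)) 1 = x 1 - 1 := by simp [Function.update_apply]
          have hu2 : (Function.update x 1 (x 1 - 1)) 2 = x 2 := by simp [Function.update_apply]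
          have hsum : ∑ j, (Function.update x 1 (x 1 - 1)) j = N - 1 := by
            rw [sum_update_pred x 1 h1, hN]
          rw [ih (N-1) (by clear t0; have := hNpos 1 h1; omega) _ hsum
            (by clear t0; rw [hu0, hu2]; omega), hu0, hu1, hu2]
          have hc : ((x 1 - 1 : ℕ) : ℤ) = (x 1:ℤ) - 1 := by clear t0; omega
          rw [hc]
          congr 1
          · congr 1 <;> ring
          · congr 1 <;> ring
        · rw [dif_neg h1, Mz_neg₂ _ (by clear t0; omega), Mz_neg₂ _ (by clear t0; omega)]
          norm_num
      have t2 : ((if h : 0 < x 2 then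
            pathCount {z : Fin 3 → ℕ | (z 0:ℤ) - (z 2:ℤ) < b} a
              (Function.update x 2 (x 2 - 1)) else 0 : ℕ) : ℤ)
          = Mz ((x 0:ℤ) - (a 0:ℤ)) ((x 1:ℤ) - (a 1:ℤ)) ((x 2:ℤ) - (a 2:ℤ) - 1)
            - Mz ((x 0:ℤ) - (a 0:ℤ) - (b - ((a 0:ℤ) - (a 2:ℤ)))) ((x 1:ℤ) - (a 1:ℤ))
              ((x 2:ℤ) - (a 2:ℤ) + (b - ((a 0:ℤ) - (a 2:ℤ))) - 1) := by
        by_cases h2 : 0 < x 2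
        · rw [dif_pos h2]
          have hu0 : (Function.update x 2 (x 2 - 1)) 0 = x 0 := by simp [Function.update_apply]
          have hu1 : (Function.update x 2 (x 2 - 1)) 1 = x 1 := by simp [Function.update_apply]
          have hu2 : (Function.update x 2 (x 2 - 1)) 2 = x 2 - 1 := by simp [Function.update_apply]
          have hsum : ∑ j, (Function.update x 2 (x 2 - 1)) j = N - 1 := by
            rw [sum_update_pred x 2 h2, hN]
          rw [ih (N-1) (by clear t0 t1; have := hNpos 2 h2; omega) _ hsum
            (by clear t0 t1; rw [hu0, hu2]; push_cast [h2]; omega), hu0, hu1, hu2]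
          have hc : ((x 2 - 1 : ℕ) : ℤ) = (x 2:ℤ) - 1 := by clear t0 t1; omega
          rw [hc]
          congr 1
          · congr 1 <;> ring
          · congr 1 <;> ring
        · rw [dif_neg h2, Mz_neg₃ _ _ (by clear t0 t1; omega), Mz_neg₁ (by clear t0 t1; omega)]
          norm_num
      have hd : ¬((x 0:ℤ) - (a 0:ℤ) = 0 ∧ (x 1:ℤ) - (a 1:ℤ) = 0 ∧ (x 2:ℤ) - (a 2:ℤ) = 0) := by
        rintro ⟨e0, e1, e2⟩
        have hx0 : x 0 = a 0 := by clear t0 t1 t2; omega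
        have hx1 : x 1 = a 1 := by clear t0 t1 t2; omega
        have hx2 : x 2 = a 2 := by clear t0 t1 t2; omega
        exact hxa (funext fun i => by
          fin_cases i <;> first | exact hx0 | exact hx1 | exact hx2)
      have hd' : ¬((x 0:ℤ) - (a 0:ℤ) - (b - ((a 0:ℤ) - (a 2:ℤ))) = 0 ∧ (x 1:ℤ) - (a 1:ℤ) = 0
          ∧ (x 2:ℤ) - (a 2:ℤ) + (b - ((a 0:ℤ) - (a 2:ℤ))) = 0) := by
        rintro ⟨e0, e1, e2⟩
        clear t0 t1 t2; omega
      rw [Fin.sum_univ_three]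
      push_cast
      rw [t0, t1, t2, Mz_rec hd, Mz_rec hd']
      ring
    · rw [if_neg hm]
      have hm' : ¬ ((x 0:ℤ) - (x 2:ℤ) < b) := hm
      have e1 : (x 0:ℤ) - (a 0:ℤ) - (b - ((a 0:ℤ) - (a 2:ℤ))) = (x 2:ℤ) - (a 2:ℤ) := by omega
      have e3 : (x 2:ℤ) - (a 2:ℤ) + (b - ((a 0:ℤ) - (a 2:ℤ))) = (x 0:ℤ) - (a 0:ℤ) := by omega
      rw [e1, e3, Mz_symm, sub_self]
      norm_num

lemma exit_step (b : ℤ) (hb : 0 < b) (y : Fin 3 → ℕ) (hyb : (y 0:ℤ) - (y 2:ℤ) = b)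
    (a : Fin 3 → ℕ) (hya : y ≠ a) :
    exitCount {z : Fin 3 → ℕ | (z 0:ℤ) - (z 2:ℤ) < b} a y
      = pathCount {z : Fin 3 → ℕ | (z 0:ℤ) - (z 2:ℤ) < b} a (Function.update y 0 (y 0 - 1)) := by
  have hy0 : 0 < y 0 := by omega
  unfold exitCount
  rw [pathCount, if_neg hya, if_pos (Set.mem_insert _ _), Fin.sum_univ_three, dif_pos hy0]
  have t1 : (if h : 0 < y 1 then
      pathCount (insert y {z : Fin 3 → ℕ | (z 0:ℤ) - (z 2:ℤ) < b}) a
        (Function.update y 1 (y 1 - 1)) else 0) = 0 := by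
    by_cases h1 : 0 < y 1
    · rw [dif_pos h1]
      apply pathCount_notmem_end
      intro hmem
      rcases hmem with h | h
      · have := congrFun h 1
        simp [Function.update_apply] at this
        omega
      · have h' : ((Function.update y 1 (y 1 - 1)) 0 : ℤ)
            - ((Function.update y 1 (y 1 - 1)) 2 : ℤ) < b := h
        simp [Function.update_apply] at h'
        omega
    · rw [dif_neg h1]
  have t2 : (if h : 0 < y 2 then
      pathCount (insert y {z : Fin 3 → ℕ | (z 0:ℤ) - (z 2:ℤ) < b}) a
        (Function.update y 2 (y 2 - 1)) else 0) = 0 := by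
    by_cases h2 : 0 < y 2
    · rw [dif_pos h2]
      apply pathCount_notmem_end
      intro hmem
      rcases hmem with h | h
      · have := congrFun h 2
        simp [Function.update_apply] at this
        clear t1; omega
      · have h' : ((Function.update y 2 (y 2 - 1)) 0 : ℤ)
            - ((Function.update y 2 (y 2 - 1)) 2 : ℤ) < b := h
        simp [Function.update_apply] at h'
        clear t1; omega
    · rw [dif_neg h2]
  rw [t1, t2, add_zero, add_zero]
  clear t1 t2
  apply pathCount_congr_s14
  intro z hz
  have hsum : ∑ j, (Function.update y 0 (y 0 - 1)) j = (∑ j, y j) - 1 :=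
    sum_update_pred y 0 hy0
  have hpos : 0 < ∑ j, y j := sum_pos_of_pos y 0 hy0
  have hzy : z ≠ y := by
    intro hzy
    rw [hzy] at hz
    omega
  simp [Set.mem_insert_iff, hzy]

lemma exit_formula (b : ℤ) (hb : 0 < b) (y : Fin 3 → ℕ) (hyb : (y 0:ℤ) - (y 2:ℤ) = b)
    (a : Fin 3 → ℕ) (hya : y ≠ a) (ha : (a 0:ℤ) - (a 2:ℤ) < b) :
    (exitCount {z : Fin 3 → ℕ | (z 0:ℤ) - (z 2:ℤ) < b} a y : ℤ)
      = Mz ((y 0:ℤ) - 1 - (a 0:ℤ)) ((y 1:ℤ) - (a 1:ℤ)) ((y 2:ℤ) - (a 2:ℤ))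
        - Mz ((y 0:ℤ) - 1 - (a 0:ℤ) - (b - ((a 0:ℤ) - (a 2:ℤ)))) ((y 1:ℤ) - (a 1:ℤ))
            ((y 2:ℤ) - (a 2:ℤ) + (b - ((a 0:ℤ) - (a 2:ℤ)))) := by
  have hy0 : 0 < y 0 := by omega
  rw [exit_step b hb y hyb a hya]
  have hu0 : (Function.update y 0 (y 0 - 1)) 0 = y 0 - 1 := by simp [Function.update_apply]
  have hu1 : (Function.update y 0 (y 0 - 1)) 1 = y 1 := by simp [Function.update_apply]
  have hu2 : (Function.update y 0 (y 0 - 1)) 2 = y 2 := by simp [Function.update_apply]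
  rw [pathCount_formula b a ha _ (Function.update y 0 (y 0 - 1)) rfl
    (by rw [hu0, hu2]; push_cast [hy0]; omega), hu0, hu1, hu2,
    (show ((y 0 - 1 : ℕ) : ℤ) = (y 0:ℤ) - 1 by omega)]

/-- For `b > 0` and a boundary point `y ∈ ℕ³` with
`y₁ - y₃ = b` and `n = y₁ + y₂ + y₃`, with `k(y)` the number of paths from the
origin staying in `R = {x : x₁ - x₃ < b}` except at `y`, and `kᵢ*(y)` the
number of such paths from `eᵢ`, the identities
`b·(n-1)·k₁*(y) = (b-1)·y₁·k(y)` and `(n-1)·k₂*(y) = y₂·k(y)` hold, i.e.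
`k₁*(y)/k(y) = ((b-1)/b)·y₁/(n-1)` and `k₂*(y)/k(y) = y₂/(n-1)`. -/

theorem estimator_count_identities_line (b : ℤ) (hb : 0 < b) (y : Fin 3 → ℕ)
    (hy : (y 0 : ℤ) - (y 2 : ℤ) = b) (n : ℕ) (hn : n = y 0 + y 1 + y 2) :
    (b * ((n : ℤ) - 1) *
        (exitCount {x : Fin 3 → ℕ | (x 0 : ℤ) - (x 2 : ℤ) < b}
          (Pi.single 0 1) y : ℤ)
      = (b - 1) * (y 0 : ℤ) *
        (exitCount {x : Fin 3 → ℕ | (x 0 : ℤ) - (x 2 : ℤ) < b} 0 y : ℤ)) ∧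
    (((n : ℤ) - 1) *
        (exitCount {x : Fin 3 → ℕ | (x 0 : ℤ) - (x 2 : ℤ) < b}
          (Pi.single 1 1) y : ℤ)
      = (y 1 : ℤ) *
        (exitCount {x : Fin 3 → ℕ | (x 0 : ℤ) - (x 2 : ℤ) < b} 0 y : ℤ)) := by
  have hy0 : 0 < y 0 := by omega
  have s0 : (Pi.single 0 1 : Fin 3 → ℕ) 0 = 1 := by simp
  have s1 : (Pi.single 0 1 : Fin 3 → ℕ) 1 = 0 := Pi.single_eq_of_ne (by decide) 1
  have s2 : (Pi.single 0 1 : Fin 3 → ℕ) 2 = 0 := Pi.single_eq_of_ne (by decide) 1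
  have u0 : (Pi.single 1 1 : Fin 3 → ℕ) 0 = 0 := Pi.single_eq_of_ne (by decide) 1
  have u1 : (Pi.single 1 1 : Fin 3 → ℕ) 1 = 1 := by simp
  have u2 : (Pi.single 1 1 : Fin 3 → ℕ) 2 = 0 := Pi.single_eq_of_ne (by decide) 1
  have hyne0 : y ≠ (0 : Fin 3 → ℕ) := by
    intro h
    have := congrFun h 0
    simp at this
    omega
  have hk := exit_formula b hb y hy 0 hyne0 (by simpa using hb)
  simp only [Pi.zero_apply, Nat.cast_zero, sub_zero] at hk
  rw [show ((y 0:ℤ) - 1 - b) = (y 2:ℤ) - 1 by clear hk; omega,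
    show ((y 2:ℤ) + b) = (y 0:ℤ) by clear hk; omega] at hk
  constructor
  · -- first identity
    by_cases hb2 : 2 ≤ b
    · have hy02 : 2 ≤ y 0 := by clear hk; omega
      have hyne : y ≠ Pi.single 0 1 := by
        intro h
        have h0 := congrFun h 0
        rw [s0] at h0
        clear hk
        omega
      have hk1 := exit_formula b hb y hy (Pi.single 0 1) hyne
        (by clear hk; rw [s0, s2]; push_cast; omega)
      rw [s0, s1, s2] at hk1
      norm_num at hk1
      rw [show ((y 0:ℤ) - 1 - 1) = (y 0:ℤ) - 2 by ring] at hk1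
      rw [show ((y 0:ℤ) - 1 - b) = (y 2:ℤ) - 1 by clear hk hk1; omega,
        show ((y 2:ℤ) + (b - 1)) = (y 0:ℤ) - 1 by clear hk hk1; omega] at hk1
      rw [hk1, hk]
      clear hk1 hk
      have h1 : ((n:ℤ) - 1) * Mz ((y 0:ℤ) - 2) (y 1:ℤ) (y 2:ℤ)
          = ((y 0:ℤ) - 1) * Mz ((y 0:ℤ) - 1) (y 1:ℤ) (y 2:ℤ) := by
        have := Mz_succ_left ((y 0:ℤ) - 2) (y 1:ℤ) (y 2:ℤ)
        rw [show ((y 0:ℤ) - 2 + 1) = (y 0:ℤ) - 1 by ring] at this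
        rw [show ((y 0:ℤ) - 1 + (y 1:ℤ) + (y 2:ℤ)) = (n:ℤ) - 1 by omega] at this
        exact this
      have h2 : ((n:ℤ) - 1) * Mz ((y 2:ℤ) - 1) (y 1:ℤ) ((y 0:ℤ) - 1)
          = (y 0:ℤ) * Mz ((y 2:ℤ) - 1) (y 1:ℤ) (y 0:ℤ) := by
        have := Mz_succ_right ((y 2:ℤ) - 1) (y 1:ℤ) ((y 0:ℤ) - 1)
        rw [show ((y 0:ℤ) - 1 + 1) = (y 0:ℤ) by ring] at this
        rw [show ((y 2:ℤ) - 1 + (y 1:ℤ) + (y 0:ℤ)) = (n:ℤ) - 1 by omega] at this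
        exact this
      have h5 : ((n:ℤ) - 1) * Mz ((y 0:ℤ) - 1) (y 1:ℤ) ((y 2:ℤ) - 1)
          = (y 2:ℤ) * Mz ((y 0:ℤ) - 1) (y 1:ℤ) (y 2:ℤ) := by
        have := Mz_succ_right ((y 0:ℤ) - 1) (y 1:ℤ) ((y 2:ℤ) - 1)
        rw [show ((y 2:ℤ) - 1 + 1) = (y 2:ℤ) by ring] at this
        rw [show ((y 0:ℤ) - 1 + (y 1:ℤ) + (y 2:ℤ)) = (n:ℤ) - 1 by omega] at this
        exact this
      have hsym : Mz ((y 0:ℤ) - 1) (y 1:ℤ) ((y 2:ℤ) - 1)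
          = Mz ((y 2:ℤ) - 1) (y 1:ℤ) ((y 0:ℤ) - 1) := Mz_symm _ _ _
      have hC : (y 2:ℤ) * Mz ((y 0:ℤ) - 1) (y 1:ℤ) (y 2:ℤ)
          = (y 0:ℤ) * Mz ((y 2:ℤ) - 1) (y 1:ℤ) (y 0:ℤ) := by
        rw [← h5, hsym]
        exact h2
      linear_combination b * h1 - b * h2 + hC + Mz ((y 0:ℤ) - 1) (y 1:ℤ) (y 2:ℤ) * hy
    · have hb1 : b = 1 := by clear hk; omega
      by_cases hy1 : y = Pi.single 0 1
      · have h0 := congrFun hy1 0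
        have h1 := congrFun hy1 1
        have h2 := congrFun hy1 2
        rw [s0] at h0
        rw [s1] at h1
        rw [s2] at h2
        have hn1 : n = 1 := by clear hk; omega
        rw [hn1, hb1]
        norm_num
      · have hmem : (Pi.single 0 1 : Fin 3 → ℕ)
            ∉ insert y {z : Fin 3 → ℕ | (z 0:ℤ) - (z 2:ℤ) < b} := by
          intro hm
          rcases hm with h | h
          · exact hy1 h.symm
          · have h' : ((Pi.single 0 1 : Fin 3 → ℕ) 0 : ℤ)
                - ((Pi.single 0 1 : Fin 3 → ℕ) 2 : ℤ) < b := h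
            rw [s0, s2] at h'
            clear hk
            omega
        have hz : exitCount {z : Fin 3 → ℕ | (z 0:ℤ) - (z 2:ℤ) < b} (Pi.single 0 1) y = 0 := by
          unfold exitCount
          exact pathCount_notmem_start hmem y
        rw [hz, hb1]
        norm_num
  · -- second identity
    have hyne1 : y ≠ Pi.single 1 1 := by
      intro h
      have := congrFun h 0
      rw [u0] at this
      clear hk
      omega
    have hk2 := exit_formula b hb y hy (Pi.single 1 1) hyne1
      (by clear hk; rw [u0, u2]; push_cast; omega)
    rw [u0, u1, u2] at hk2
    norm_num at hk2
    rw [show ((y 0:ℤ) - 1 - b) = (y 2:ℤ) - 1 by clear hk hk2; omega,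
      show ((y 2:ℤ) + b) = (y 0:ℤ) by clear hk hk2; omega] at hk2
    rw [hk2, hk]
    clear hk2 hk
    have g1 : ((n:ℤ) - 1) * Mz ((y 0:ℤ) - 1) ((y 1:ℤ) - 1) (y 2:ℤ)
        = (y 1:ℤ) * Mz ((y 0:ℤ) - 1) (y 1:ℤ) (y 2:ℤ) := by
      have := Mz_succ_mid ((y 0:ℤ) - 1) ((y 1:ℤ) - 1) (y 2:ℤ)
      rw [show ((y 1:ℤ) - 1 + 1) = (y 1:ℤ) by ring] at this
      rw [show ((y 0:ℤ) - 1 + (y 1:ℤ) + (y 2:ℤ)) = (n:ℤ) - 1 by omega] at this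
      exact this
    have g2 : ((n:ℤ) - 1) * Mz ((y 2:ℤ) - 1) ((y 1:ℤ) - 1) (y 0:ℤ)
        = (y 1:ℤ) * Mz ((y 2:ℤ) - 1) (y 1:ℤ) (y 0:ℤ) := by
      have := Mz_succ_mid ((y 2:ℤ) - 1) ((y 1:ℤ) - 1) (y 0:ℤ)
      rw [show ((y 1:ℤ) - 1 + 1) = (y 1:ℤ) by ring] at this
      rw [show ((y 2:ℤ) - 1 + (y 1:ℤ) + (y 0:ℤ)) = (n:ℤ) - 1 by omega] at this
      exact this
    linear_combination g1 - g2
end
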